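/- arXiv:math/0611527 — 3 statements merged into one kernel-verified Lean document; each statement's English description precedes it below -/
import Mathlib

section
/- Let Π be a polar space of rank n ≥ 3 and let p, q be distinct collinear points of Π. Then {p, q}^{⊥⊥} equals the line p q; in particular (p q)^{⊥⊥} = p q. -/
/- Common framework: polar spaces of rank `n`, singular subspaces, projective
dimension, Grassmannians, bases and base subsets, inexact/complement subsets,
following Pankov, "Base subsets of polar Grassmannians". -/

namespace PolarGeo

variable {P : Type*}

/-- The (reflexive) collinearity relation determined by a family of lines. -/
def Col (lines : Set (Set P)) (p q : P) : Prop :=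
  p = q ∨ ∃ L ∈ lines, p ∈ L ∧ q ∈ L

/-- `S` is a subspace: it contains every line through two of its distinct
collinear points. -/
def IsSubspace (lines : Set (Set P)) (S : Set P) : Prop :=
  ∀ p ∈ S, ∀ q ∈ S, p ≠ q → ∀ L ∈ lines, p ∈ L → q ∈ L → L ⊆ S

/-- A singular subspace: a subspace whose points are mutually collinear. -/
def IsSingular (lines : Set (Set P)) (S : Set P) : Prop :=
  IsSubspace lines S ∧ ∀ p ∈ S, ∀ q ∈ S, Col lines p q

/-- A flag: a chain of nonempty singular subspaces. -/
def IsFlag (lines : Set (Set P)) (C : Set (Set P)) : Prop :=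
  IsChain (· ⊆ ·) C ∧ ∀ T ∈ C, IsSingular lines T ∧ T.Nonempty

/-- A polar space of rank `n` on the point set `P`: a partial linear space
such that every point is collinear with one or all points of every line, no
point is collinear with all others, and every maximal flag of singular
subspaces consists of `n` elements. -/
structure PolarSpace (P : Type*) (n : ℕ) where
  lines : Set (Set P)
  line_proper : ∀ L ∈ lines, L ≠ (Set.univ : Set P)
  line_two : ∀ L ∈ lines, ∃ p ∈ L, ∃ q ∈ L, p ≠ q
  point_on_line : ∀ p : P, ∃ L ∈ lines, p ∈ L
  unique_line : ∀ p q : P, p ≠ q → ∀ L₁ ∈ lines, ∀ L₂ ∈ lines,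
    p ∈ L₁ → q ∈ L₁ → p ∈ L₂ → q ∈ L₂ → L₁ = L₂
  one_or_all : ∀ p : P, ∀ L ∈ lines,
    (∃! q, q ∈ L ∧ Col lines p q) ∨ ∀ q ∈ L, Col lines p q
  no_center : ∀ p : P, ∃ q : P, ¬ Col lines p q
  flag_card : ∀ C : Set (Set P), IsFlag lines C →
    (∀ C', IsFlag lines C' → C ⊆ C' → C = C') → C.ncard = n

/-- A flag all of whose members are contained in `S`. -/
def IsFlagIn (lines : Set (Set P)) (S : Set P) (C : Set (Set P)) : Prop :=
  IsFlag lines C ∧ ∀ T ∈ C, T ⊆ S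

/-- `S` is a singular subspace of projective dimension `m` (so `dim ∅ = -1`):
a maximal chain of nonempty singular subspaces contained in `S` has `m + 1`
members. -/
def HasDim (lines : Set (Set P)) (S : Set P) (m : ℤ) : Prop :=
  IsSingular lines S ∧ ∃ C : Set (Set P), IsFlagIn lines S C ∧
    (∀ C', IsFlagIn lines S C' → C ⊆ C' → C = C') ∧
    C.Finite ∧ (C.ncard : ℤ) = m + 1

/-- The Grassmannian `G_m` of `m`-dimensional singular subspaces. -/
def Gdim (lines : Set (Set P)) (m : ℤ) : Set (Set P) := {S | HasDim lines S m}

/-- The span of `X`: the smallest subspace containing `X`. -/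
def span (lines : Set (Set P)) (X : Set P) : Set P :=
  ⋂₀ {S : Set P | IsSubspace lines S ∧ X ⊆ S}

/-- `X ⊥`: the set of points collinear with every point of `X`. -/
def perp (lines : Set (Set P)) (X : Set P) : Set P :=
  {y | ∀ x ∈ X, Col lines x y}

/-- A base of the polar space: `2n` points each of which is non-collinear
with exactly one of them. -/
def IsBase (lines : Set (Set P)) {n : ℕ} (p : Fin (2 * n) → P) : Prop :=
  Function.Injective p ∧ ∀ i, ∃! j, ¬ Col lines (p i) (p j)

/-- The base subset of `G_k` associated with a base: all `k`-dimensional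
singular subspaces spanned by points of the base. -/
def baseSubset (lines : Set (Set P)) {n : ℕ} (p : Fin (2 * n) → P) (k : ℤ) :
    Set (Set P) :=
  {S | HasDim lines S k ∧ ∃ I : Set (Fin (2 * n)), S = span lines (p '' I)}

/-- `𝓑(+x)`: the elements of `𝓑` containing the point `x`. -/
def plus (𝓑 : Set (Set P)) (x : P) : Set (Set P) := {S ∈ 𝓑 | x ∈ S}

/-- `𝓑(-x)`: the elements of `𝓑` not containing the point `x`. -/
def minus (𝓑 : Set (Set P)) (x : P) : Set (Set P) := {S ∈ 𝓑 | x ∉ S}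

/-- `R ⊆ 𝓑` is inexact: some base subset of `G_k` different from `𝓑`
contains `R`. -/
def IsInexact (lines : Set (Set P)) (n : ℕ) (k : ℤ) (𝓑 R : Set (Set P)) : Prop :=
  R ⊆ 𝓑 ∧ ∃ p' : Fin (2 * n) → P, IsBase lines p' ∧
    R ⊆ baseSubset lines p' k ∧ baseSubset lines p' k ≠ 𝓑

/-- `R ⊆ 𝓑` is exact: `𝓑` is the only base subset of `G_k` containing `R`. -/
def IsExact (lines : Set (Set P)) (n : ℕ) (k : ℤ) (𝓑 R : Set (Set P)) : Prop :=
  R ⊆ 𝓑 ∧ ∀ p' : Fin (2 * n) → P, IsBase lines p' →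
    R ⊆ baseSubset lines p' k → baseSubset lines p' k = 𝓑

/-- A maximal inexact subset of `𝓑`. -/
def IsMaxInexact (lines : Set (Set P)) (n : ℕ) (k : ℤ) (𝓑 R : Set (Set P)) : Prop :=
  IsInexact lines n k 𝓑 R ∧ ∀ R', IsInexact lines n k 𝓑 R' → R ⊆ R' → R = R'

/-- A complement subset of `𝓑`: the complement of a maximal inexact subset. -/
def IsComplement (lines : Set (Set P)) (n : ℕ) (k : ℤ) (𝓑 R : Set (Set P)) : Prop :=
  R ⊆ 𝓑 ∧ IsMaxInexact lines n k 𝓑 (𝓑 \ R)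

/-- Type `C`: every `(n-2)`-dimensional singular subspace is contained in at
least `3` maximal singular subspaces. -/
def TypeC (lines : Set (Set P)) (n : ℕ) : Prop :=
  ∀ S ∈ Gdim lines ((n : ℤ) - 2), ∃ M₁ ∈ Gdim lines ((n : ℤ) - 1),
    ∃ M₂ ∈ Gdim lines ((n : ℤ) - 1), ∃ M₃ ∈ Gdim lines ((n : ℤ) - 1),
      M₁ ≠ M₂ ∧ M₁ ≠ M₃ ∧ M₂ ≠ M₃ ∧ S ⊆ M₁ ∧ S ⊆ M₂ ∧ S ⊆ M₃

/-- Type `D`: every `(n-2)`-dimensional singular subspace is contained in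
exactly `2` maximal singular subspaces. -/
def TypeD (lines : Set (Set P)) (n : ℕ) : Prop :=
  ∀ S ∈ Gdim lines ((n : ℤ) - 2),
    {M | M ∈ Gdim lines ((n : ℤ) - 1) ∧ S ⊆ M}.ncard = 2

/-- A collineation of a point-line geometry on the whole type: a bijection
preserving the family of lines in both directions. -/
def IsCollineation (lines : Set (Set P)) (f : P → P) : Prop :=
  Function.Bijective f ∧ ∀ L : Set P, L ∈ lines ↔ f '' L ∈ lines

/-- A collineation of a partial linear space whose point set is the subset
`pts` of `X`: a bijection of `pts` mapping the family of lines onto itself in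
both directions. -/
def IsCollineationOn {X : Type*} (pts : Set X) (lns : Set (Set X)) (f : X → X) : Prop :=
  Set.BijOn f pts pts ∧ (∀ ℓ ∈ lns, f '' ℓ ∈ lns) ∧
    (∀ ℓ ∈ lns, ∃ ℓ' ∈ lns, f '' ℓ' = ℓ)

/-- Lines of the Grassmann space `𝔊_k`. For `k ≤ n - 2` a line is given by
incident `S ∈ G_{k-1}`, `U ∈ G_{k+1}` (for `k = 0` this is the shadow of an
element of `G_1`); for `k = n - 1` a line is given by an element of
`G_{n-2}`. -/
def grassLines (lines : Set (Set P)) (n k : ℕ) : Set (Set (Set P)) :=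
  if k = n - 1 then
    {ℓ | ∃ S ∈ Gdim lines ((n : ℤ) - 2),
      ℓ = {T | T ∈ Gdim lines ((n : ℤ) - 1) ∧ S ⊆ T}}
  else
    {ℓ | ∃ S ∈ Gdim lines ((k : ℤ) - 1), ∃ U ∈ Gdim lines ((k : ℤ) + 1),
      S ⊆ U ∧ ℓ = {T | T ∈ Gdim lines (k : ℤ) ∧ S ⊆ T ∧ T ⊆ U}}

/-- Collinearity of distinct points of `𝔊_k` for `k ≤ n - 2`: `S ⊥ U` and
the span of `S ∪ U` is `(k+1)`-dimensional. -/
def GColl (lines : Set (Set P)) (k : ℤ) (S U : Set P) : Prop :=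
  S ≠ U ∧ (∀ a ∈ S, ∀ b ∈ U, Col lines a b) ∧
    span lines (S ∪ U) ∈ Gdim lines (k + 1)

/-- Weak adjacency in `G_k`: the intersection is `(k-1)`-dimensional. -/
def WeakAdj (lines : Set (Set P)) (k : ℤ) (S U : Set P) : Prop :=
  S ∩ U ∈ Gdim lines (k - 1)

/-- The complement subset `C_{ij} = 𝓑(+i,-j) ∪ 𝓑(+σ(j),-σ(i))` of second
type. -/
def Cij (lines : Set (Set P)) {n : ℕ} (p : Fin (2 * n) → P)
    (σ : Fin (2 * n) → Fin (2 * n)) (k : ℤ) (i j : Fin (2 * n)) : Set (Set P) :=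
  (plus (baseSubset lines p k) (p i) ∩ minus (baseSubset lines p k) (p j)) ∪
  (plus (baseSubset lines p k) (p (σ j)) ∩ minus (baseSubset lines p k) (p (σ i)))

/-- The inexact subset
`R_{ij} = 𝓑(+i,+j) ∪ 𝓑(+σ(i),+σ(j)) ∪ 𝓑(-i,-σ(j))` of second type. -/
def Rij (lines : Set (Set P)) {n : ℕ} (p : Fin (2 * n) → P)
    (σ : Fin (2 * n) → Fin (2 * n)) (k : ℤ) (i j : Fin (2 * n)) : Set (Set P) :=
  (plus (baseSubset lines p k) (p i) ∩ plus (baseSubset lines p k) (p j)) ∪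
  (plus (baseSubset lines p k) (p (σ i)) ∩ plus (baseSubset lines p k) (p (σ j))) ∪
  (minus (baseSubset lines p k) (p i) ∩ minus (baseSubset lines p k) (p (σ j)))

/-- `c(S,U)`: the number of complement subsets of second type of the base
subset containing both `S` and `U`. -/
noncomputable def cCount (lines : Set (Set P)) {n : ℕ} (p : Fin (2 * n) → P)
    (σ : Fin (2 * n) → Fin (2 * n)) (k : ℤ) (S U : Set P) : ℕ :=
  {R : Set (Set P) | (∃ i j, j ≠ i ∧ j ≠ σ i ∧ R = Cij lines p σ k i j) ∧
    S ∈ R ∧ U ∈ R}.ncard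

/-- `O_+`, `O_-` form the half-spin partition of `G_{n-1}`: two maximal
singular subspaces lie in the same class iff `n - dim (S ∩ U)` is odd. -/
def IsHalfSpinPair (lines : Set (Set P)) (n : ℕ) (Opos Oneg : Set (Set P)) : Prop :=
  Opos.Nonempty ∧ Oneg.Nonempty ∧ Disjoint Opos Oneg ∧
  Opos ∪ Oneg = Gdim lines ((n : ℤ) - 1) ∧
  ∀ S ∈ Gdim lines ((n : ℤ) - 1), ∀ U ∈ Gdim lines ((n : ℤ) - 1),
    ((S ∈ Opos ↔ U ∈ Opos) ↔ ∃ m : ℤ, HasDim lines (S ∩ U) m ∧ Odd ((n : ℤ) - m))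

/-- The base subset of `O_δ` associated with a base. -/
def baseSubsetO (lines : Set (Set P)) (n : ℕ) (Oδ : Set (Set P))
    (p : Fin (2 * n) → P) : Set (Set P) :=
  Oδ ∩ baseSubset lines p ((n : ℤ) - 1)

/-- `R ⊆ 𝓑` is inexact in `O_δ`: some base subset of `O_δ` different from
`𝓑` contains `R`. -/
def IsInexactO (lines : Set (Set P)) (n : ℕ) (Oδ : Set (Set P))
    (𝓑 R : Set (Set P)) : Prop :=
  R ⊆ 𝓑 ∧ ∃ p' : Fin (2 * n) → P, IsBase lines p' ∧
    R ⊆ baseSubsetO lines n Oδ p' ∧ baseSubsetO lines n Oδ p' ≠ 𝓑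

/-- A maximal inexact subset of a base subset `𝓑` of `O_δ`. -/
def IsMaxInexactO (lines : Set (Set P)) (n : ℕ) (Oδ : Set (Set P))
    (𝓑 R : Set (Set P)) : Prop :=
  IsInexactO lines n Oδ 𝓑 R ∧
    ∀ R', IsInexactO lines n Oδ 𝓑 R' → R ⊆ R' → R = R'

/-- A complement subset of a base subset `𝓑` of `O_δ`. -/
def IsComplementO (lines : Set (Set P)) (n : ℕ) (Oδ : Set (Set P))
    (𝓑 R : Set (Set P)) : Prop :=
  R ⊆ 𝓑 ∧ IsMaxInexactO lines n Oδ 𝓑 (𝓑 \ R)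

/-- Lines of the half-spin space `𝔒_δ`: sets of all elements of `O_δ`
containing a fixed `(n-3)`-dimensional singular subspace. -/
def halfSpinLines (lines : Set (Set P)) (n : ℕ) (Oδ : Set (Set P)) :
    Set (Set (Set P)) :=
  {ℓ | ∃ S ∈ Gdim lines ((n : ℤ) - 3), ℓ = {T | T ∈ Oδ ∧ S ⊆ T}}

end PolarGeo

open PolarGeo
section DoublePerpHelpers

variable {P : Type*}

private lemma dp_col_refl {lines : Set (Set P)} (p : P) : Col lines p p := Or.inl rfl

private lemma dp_col_symm {lines : Set (Set P)} {p q : P} (h : Col lines p q) :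
    Col lines q p := by
  rcases h with h | ⟨L, hL, hp, hq⟩
  · exact Or.inl h.symm
  · exact Or.inr ⟨L, hL, hq, hp⟩

private lemma dp_col_of_mem {lines : Set (Set P)} {L : Set P} (hL : L ∈ lines) {p q : P}
    (hp : p ∈ L) (hq : q ∈ L) : Col lines p q := Or.inr ⟨L, hL, hp, hq⟩

private lemma dp_line_of {lines : Set (Set P)} {p q : P} (h : Col lines p q) (hne : p ≠ q) :
    ∃ L ∈ lines, p ∈ L ∧ q ∈ L := by
  rcases h with h | ⟨L, hL, hp, hq⟩
  · exact absurd h hne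
  · exact ⟨L, hL, hp, hq⟩

variable {n : ℕ} (Pol : PolarSpace P n)

/-- If `s` is collinear with two distinct points of a line, it is collinear with
every point of that line. -/
private lemma dp_all_of_two {L : Set P} (hL : L ∈ Pol.lines) {a b s : P}
    (ha : a ∈ L) (hb : b ∈ L) (hab : a ≠ b)
    (hsa : Col Pol.lines s a) (hsb : Col Pol.lines s b) :
    ∀ t ∈ L, Col Pol.lines s t := by
  rcases Pol.one_or_all s L hL with h | h
  · exact absurd (h.unique ⟨ha, hsa⟩ ⟨hb, hsb⟩) hab
  · exact h

/-- If `s` is non-collinear with some point of a line, it is collinear with exactly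
one point of that line. -/
private lemma dp_unique_col {L : Set P} (hL : L ∈ Pol.lines) {a : P} (s : P) (ha : a ∈ L)
    (hna : ¬ Col Pol.lines s a) : ∃! t, t ∈ L ∧ Col Pol.lines s t := by
  rcases Pol.one_or_all s L hL with h | h
  · exact h
  · exact absurd (h a ha) hna

/-- (†) In a nondegenerate polar space, `x^⊥ ⊆ y^⊥` implies `x = y`. -/
private lemma dp_perp_le_eq {x y : P}
    (H : ∀ s, Col Pol.lines s x → Col Pol.lines s y) : x = y := by
  by_contra hxy
  have hxyc : Col Pol.lines x y := H x (dp_col_refl x)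
  obtain ⟨M, hM, hxM, hyM⟩ := dp_line_of hxyc hxy
  have Hx : ∀ t ∈ M, ∀ s, Col Pol.lines s x → Col Pol.lines s t := by
    intro t ht s hs
    exact dp_all_of_two Pol hM hxM hyM hxy hs (H s hs) t ht
  obtain ⟨u, hu⟩ := Pol.no_center y
  have hux : ¬ Col Pol.lines u x := fun h => hu (dp_col_symm (H u h))
  obtain ⟨c, ⟨hcM, huc⟩, _⟩ := dp_unique_col Pol hM u hxM hux
  obtain ⟨v, hv⟩ := Pol.no_center c
  have hvc : ¬ Col Pol.lines v c := fun h => hv (dp_col_symm h)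
  have hvx : ¬ Col Pol.lines v x := fun h => hvc (Hx c hcM v h)
  obtain ⟨d, ⟨hdM, hvd⟩, _⟩ := dp_unique_col Pol hM v hcM hvc
  have hdc : d ≠ c := fun h => hvc (h ▸ hvd)
  by_cases huv : Col Pol.lines u v
  · have hune : u ≠ v := fun h => hvc (h ▸ huc)
    obtain ⟨T, hT, huT, hvT⟩ := dp_line_of huv hune
    have hxu : ¬ Col Pol.lines x u := fun h => hux (dp_col_symm h)
    obtain ⟨g, ⟨hgT, hxg⟩, _⟩ := dp_unique_col Pol hT x huT hxu
    have hgc : Col Pol.lines c g := dp_col_symm (Hx c hcM g (dp_col_symm hxg))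
    have hgu : g = u :=
      (dp_unique_col Pol hT c hvT hv).unique ⟨hgT, hgc⟩ ⟨huT, dp_col_symm huc⟩
    exact hxu (hgu ▸ hxg)
  · have hvd_ne : v ≠ d := by
      intro h; exact hvc (by rw [h]; exact dp_col_of_mem hM hdM hcM)
    obtain ⟨D, hD, hvD, hdD⟩ := dp_line_of hvd hvd_ne
    have hud : ¬ Col Pol.lines u d := fun h =>
      hux (dp_all_of_two Pol hM hcM hdM (Ne.symm hdc) huc h x hxM)
    obtain ⟨e, ⟨heD, hue⟩, _⟩ := dp_unique_col Pol hD u hvD huv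
    have hed : e ≠ d := fun h => hud (h ▸ hue)
    have hce : ¬ Col Pol.lines c e := fun h =>
      hed ((dp_unique_col Pol hD c hvD hv).unique ⟨heD, h⟩
        ⟨hdD, dp_col_of_mem hM hcM hdM⟩)
    have hxv : ¬ Col Pol.lines x v := fun h => hvx (dp_col_symm h)
    have hxe : ¬ Col Pol.lines x e := fun h =>
      hed ((dp_unique_col Pol hD x hvD hxv).unique ⟨heD, h⟩
        ⟨hdD, dp_col_of_mem hM hxM hdM⟩)
    have hue_ne : u ≠ e := by
      intro h; exact huv (by rw [h]; exact dp_col_of_mem hD heD hvD)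
    obtain ⟨T, hT, huT, heT⟩ := dp_line_of hue hue_ne
    have hxu : ¬ Col Pol.lines x u := fun h => hux (dp_col_symm h)
    obtain ⟨g, ⟨hgT, hxg⟩, _⟩ := dp_unique_col Pol hT x huT hxu
    have hgc : Col Pol.lines c g := dp_col_symm (Hx c hcM g (dp_col_symm hxg))
    have hgu : g = u :=
      (dp_unique_col Pol hT c heT hce).unique ⟨hgT, hgc⟩ ⟨huT, dp_col_symm huc⟩
    exact hxu (hgu ▸ hxg)

private lemma dp_exists_col_not_col {x y : P} (h : x ≠ y) :
    ∃ u, Col Pol.lines u x ∧ ¬ Col Pol.lines u y := by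
  by_contra hc
  push_neg at hc
  exact h (dp_perp_le_eq Pol fun s hs => hc s hs)

/-- Relativized version of (†) inside `z^⊥`: if `w, x` are distinct points of a line `M`
not containing `z`, both collinear with `z`, and every point collinear with both `w` and
`z` is collinear with `x`, we get a contradiction. -/
private lemma dp_relative_perp {z w x : P} {M : Set P} (hM : M ∈ Pol.lines)
    (hwM : w ∈ M) (hxM : x ∈ M) (hzM : z ∉ M) (hwx : w ≠ x)
    (hzw : Col Pol.lines z w) (hzx : Col Pol.lines z x)
    (H : ∀ s, Col Pol.lines s w → Col Pol.lines s z → Col Pol.lines s x) : False := by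
  have hzx_ne : z ≠ x := fun h => hzM (by rw [h]; exact hxM)
  have hzAll : ∀ t ∈ M, Col Pol.lines z t :=
    dp_all_of_two Pol hM hwM hxM hwx hzw hzx
  have Hw : ∀ t ∈ M, ∀ s, Col Pol.lines s w → Col Pol.lines s z →
      Col Pol.lines s t := by
    intro t ht s h1 h2
    exact dp_all_of_two Pol hM hwM hxM hwx h1 (H s h1 h2) t ht
  obtain ⟨u, huz, hux⟩ := dp_exists_col_not_col Pol hzx_ne
  have huw : ¬ Col Pol.lines u w := fun h => hux (H u h huz)
  obtain ⟨c, ⟨hcM, huc⟩, _⟩ := dp_unique_col Pol hM u hxM hux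
  have hcz : z ≠ c := fun h => hzM (by rw [h]; exact hcM)
  obtain ⟨v, hvz, hvc⟩ := dp_exists_col_not_col Pol hcz
  have hvc' : ¬ Col Pol.lines c v := fun h => hvc (dp_col_symm h)
  have hvw : ¬ Col Pol.lines v w := fun h => hvc (Hw c hcM v h hvz)
  obtain ⟨d, ⟨hdM, hvd⟩, _⟩ := dp_unique_col Pol hM v hcM hvc
  have hdc : d ≠ c := fun h => hvc (h ▸ hvd)
  by_cases huv : Col Pol.lines u v
  · have hune : u ≠ v := fun h => hvc (h ▸ huc)
    obtain ⟨T, hT, huT, hvT⟩ := dp_line_of huv hune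
    have hzT : ∀ t ∈ T, Col Pol.lines z t :=
      dp_all_of_two Pol hT huT hvT hune (dp_col_symm huz) (dp_col_symm hvz)
    have hwu : ¬ Col Pol.lines w u := fun h => huw (dp_col_symm h)
    obtain ⟨g, ⟨hgT, hwg⟩, _⟩ := dp_unique_col Pol hT w huT hwu
    have hgc : Col Pol.lines c g :=
      dp_col_symm (Hw c hcM g (dp_col_symm hwg) (dp_col_symm (hzT g hgT)))
    have hgu : g = u :=
      (dp_unique_col Pol hT c hvT hvc').unique ⟨hgT, hgc⟩ ⟨huT, dp_col_symm huc⟩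
    exact hwu (hgu ▸ hwg)
  · have hvd_ne : v ≠ d := by
      intro h; exact hvc (by rw [h]; exact dp_col_of_mem hM hdM hcM)
    obtain ⟨D, hD, hvD, hdD⟩ := dp_line_of hvd hvd_ne
    have hud : ¬ Col Pol.lines u d := fun h =>
      hux (dp_all_of_two Pol hM hcM hdM (Ne.symm hdc) huc h x hxM)
    obtain ⟨e, ⟨heD, hue⟩, _⟩ := dp_unique_col Pol hD u hvD huv
    have hed : e ≠ d := fun h => hud (h ▸ hue)
    have hzD : ∀ t ∈ D, Col Pol.lines z t :=
      dp_all_of_two Pol hD hvD hdD hvd_ne (dp_col_symm hvz) (hzAll d hdM)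
    have hce : ¬ Col Pol.lines c e := fun h =>
      hed ((dp_unique_col Pol hD c hvD hvc').unique ⟨heD, h⟩
        ⟨hdD, dp_col_of_mem hM hcM hdM⟩)
    have hvw' : ¬ Col Pol.lines w v := fun h => hvw (dp_col_symm h)
    have hwe : ¬ Col Pol.lines w e := fun h =>
      hed ((dp_unique_col Pol hD w hvD hvw').unique ⟨heD, h⟩
        ⟨hdD, dp_col_of_mem hM hwM hdM⟩)
    have hue_ne : u ≠ e := by
      intro h; exact huv (by rw [h]; exact dp_col_of_mem hD heD hvD)
    obtain ⟨T, hT, huT, heT⟩ := dp_line_of hue hue_ne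
    have hzT : ∀ t ∈ T, Col Pol.lines z t :=
      dp_all_of_two Pol hT huT heT hue_ne (dp_col_symm huz) (hzD e heD)
    have hwu : ¬ Col Pol.lines w u := fun h => huw (dp_col_symm h)
    obtain ⟨g, ⟨hgT, hwg⟩, _⟩ := dp_unique_col Pol hT w huT hwu
    have hgc : Col Pol.lines c g :=
      dp_col_symm (Hw c hcM g (dp_col_symm hwg) (dp_col_symm (hzT g hgT)))
    have hgu : g = u :=
      (dp_unique_col Pol hT c heT hce).unique ⟨hgT, hgc⟩ ⟨huT, dp_col_symm huc⟩
    exact hwu (hgu ▸ hwg)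

end DoublePerpHelpers
/-- For distinct collinear points `p, q`, `{p,q}^⊥⊥` is the line `p q`; in
particular `(p q)^⊥⊥ = p q`. -/
theorem double_perp_of_collinear
    {P : Type*} {n : ℕ} (Pol : PolarSpace P n) (hn : 3 ≤ n)
    (p q : P) (hpq : p ≠ q) (hcol : Col Pol.lines p q)
    (L : Set P) (hL : L ∈ Pol.lines) (hpL : p ∈ L) (hqL : q ∈ L) :
    perp Pol.lines (perp Pol.lines ({p, q} : Set P)) = L ∧
      perp Pol.lines (perp Pol.lines L) = L := by
  classical
  have hperp_eq : perp Pol.lines ({p, q} : Set P) = perp Pol.lines L := by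
    ext s
    constructor
    · intro h t ht
      have hp' : Col Pol.lines p s := h p (Or.inl rfl)
      have hq' : Col Pol.lines q s := h q (Or.inr rfl)
      exact dp_col_symm
        (dp_all_of_two Pol hL hpL hqL hpq (dp_col_symm hp') (dp_col_symm hq') t ht)
    · intro h t ht
      rcases ht with rfl | rfl
      · exact h t hpL
      · exact h t hqL
  have key : perp Pol.lines (perp Pol.lines L) = L := by
    apply Set.Subset.antisymm
    · intro x hx
      by_contra hxL
      have hpperp : p ∈ perp Pol.lines L := fun t ht => dp_col_of_mem hL ht hpL
      have hqperp : q ∈ perp Pol.lines L := fun t ht => dp_col_of_mem hL ht hqL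
      have hpx : Col Pol.lines p x := hx p hpperp
      have hqx : Col Pol.lines q x := hx q hqperp
      have hqx_ne : q ≠ x := fun h => hxL (by rw [← h]; exact hqL)
      obtain ⟨M, hM, hqM, hxM⟩ := dp_line_of hqx hqx_ne
      have hpM : p ∉ M := by
        intro hpM
        have hML : M = L := Pol.unique_line p q hpq M hM L hL hpM hqM hpL hqL
        exact hxL (hML ▸ hxM)
      have H : ∀ s, Col Pol.lines s q → Col Pol.lines s p → Col Pol.lines s x := by
        intro s h1 h2
        have hsperp : s ∈ perp Pol.lines L := fun t ht =>
          dp_col_symm (dp_all_of_two Pol hL hpL hqL hpq h2 h1 t ht)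
        exact hx s hsperp
      exact dp_relative_perp Pol hM hqM hxM hpM hqx_ne hcol hpx H
    · intro t ht s hs
      exact dp_col_symm (hs t ht)
  exact ⟨by rw [hperp_eq]; exact key, key⟩
end

section
/- Let Π be a polar space of rank n ≥ 3 of type C, let 0 ≤ k ≤ n−2, let B = {p_1, …, p_{2n}} be a base of Π and 𝓑 the associated base subset of G_k. For every i ∈ {1, …, 2n}, the subset 𝓑(−i) is a maximal inexact subset of 𝓑. -/
namespace PolarGeoAux
open PolarGeo Set

variable {P : Type*}

lemma col_refl (lines : Set (Set P)) (a : P) : Col lines a a := Or.inl rfl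

lemma col_symm {lines : Set (Set P)} {a b : P} (h : Col lines a b) : Col lines b a := by
  rcases h with rfl | ⟨L, hL, h1, h2⟩
  · exact Or.inl rfl
  · exact Or.inr ⟨L, hL, h2, h1⟩

lemma col_of_line {lines : Set (Set P)} {L : Set P} (hL : L ∈ lines) {a b : P}
    (ha : a ∈ L) (hb : b ∈ L) : Col lines a b := Or.inr ⟨L, hL, ha, hb⟩

lemma line_of_col {lines : Set (Set P)} {a b : P} (h : Col lines a b) (hne : a ≠ b) :
    ∃ L ∈ lines, a ∈ L ∧ b ∈ L := by
  rcases h with rfl | ⟨L, hL, h1, h2⟩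
  · exact absurd rfl hne
  · exact ⟨L, hL, h1, h2⟩

lemma isSubspace_sInter {lines : Set (Set P)} {𝒮 : Set (Set P)}
    (h : ∀ S ∈ 𝒮, IsSubspace lines S) : IsSubspace lines (⋂₀ 𝒮) := by
  intro a ha b hb hab L hL haL hbL x hx S hS
  exact h S hS a (ha S hS) b (hb S hS) hab L hL haL hbL hx

lemma span_isSubspace (lines : Set (Set P)) (X : Set P) : IsSubspace lines (span lines X) :=
  isSubspace_sInter (fun _ hS => hS.1)

lemma subset_span (lines : Set (Set P)) (X : Set P) : X ⊆ span lines X := by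
  intro x hx S hS
  exact hS.2 hx

lemma span_subset_of {lines : Set (Set P)} {X S : Set P} (hS : IsSubspace lines S)
    (h : X ⊆ S) : span lines X ⊆ S := by
  intro x hx
  exact hx S ⟨hS, h⟩

lemma span_mono {lines : Set (Set P)} {X Y : Set P} (h : X ⊆ Y) :
    span lines X ⊆ span lines Y :=
  span_subset_of (span_isSubspace lines Y) (h.trans (subset_span lines Y))

lemma isSubspace_empty (lines : Set (Set P)) : IsSubspace lines (∅ : Set P) := by
  intro a ha; exact absurd ha (notMem_empty a)

lemma isSubspace_singleton (lines : Set (Set P)) (y : P) : IsSubspace lines ({y} : Set P) := by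
  intro a ha b hb hab
  rcases ha with rfl
  rcases hb with rfl
  exact absurd rfl hab

lemma span_empty (lines : Set (Set P)) : span lines (∅ : Set P) = ∅ :=
  subset_antisymm (span_subset_of (isSubspace_empty lines) (by simp)) (by simp)

lemma span_singleton (lines : Set (Set P)) (y : P) : span lines ({y} : Set P) = {y} :=
  subset_antisymm (span_subset_of (isSubspace_singleton lines y) subset_rfl)
    (subset_span lines _)

variable {n : ℕ} (Pol : PolarSpace P n)

/-- The perp of a point is a subspace. -/
lemma isSubspace_perp (z : P) : IsSubspace Pol.lines {y | Col Pol.lines z y} := by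
  intro a ha b hb hab L hL haL hbL x hx
  rcases Pol.one_or_all z L hL with ⟨u, _, huniq⟩ | hall
  · exact absurd (((huniq a ⟨haL, ha⟩).trans (huniq b ⟨hbL, hb⟩).symm)) hab
  · exact hall x hx

/-- cliques: sets of pairwise collinear points -/
def Cliq (lines : Set (Set P)) (C : Set P) : Prop := ∀ a ∈ C, ∀ b ∈ C, Col lines a b

lemma isSingular_of_subset_cliq {T M : Set P} (hT : IsSubspace Pol.lines T)
    (hTM : T ⊆ M) (hM : Cliq Pol.lines M) : IsSingular Pol.lines T :=
  ⟨hT, fun a ha b hb => hM a (hTM ha) b (hTM hb)⟩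

/-- every clique extends to a singular subspace -/
lemma exists_max_clique {K : Set P} (hK : Cliq Pol.lines K) :
    ∃ M, K ⊆ M ∧ Cliq Pol.lines M ∧ IsSubspace Pol.lines M := by
  have hub : ∀ c ⊆ {C | Cliq Pol.lines C ∧ K ⊆ C}, IsChain (· ⊆ ·) c → c.Nonempty →
      ∃ ub ∈ {C | Cliq Pol.lines C ∧ K ⊆ C}, ∀ s ∈ c, s ⊆ ub := by
    intro c hc hchain hcne
    refine ⟨⋃₀ c, ⟨?_, ?_⟩, fun s hs => subset_sUnion_of_mem hs⟩
    · rintro x ⟨s, hs, hx⟩ y ⟨t, ht, hy⟩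
      rcases hchain.total hs ht with h | h
      · exact (hc ht).1 x (h hx) y hy
      · exact (hc hs).1 x hx y (h hy)
    · rcases hcne with ⟨s, hs⟩
      exact (hc hs).2.trans (subset_sUnion_of_mem hs)
  obtain ⟨M, hKM, hMmax⟩ := zorn_subset_nonempty {C | Cliq Pol.lines C ∧ K ⊆ C}
    hub K ⟨hK, subset_rfl⟩
  refine ⟨M, hMmax.prop.2, hMmax.prop.1, ?_⟩
  intro a ha b hb hab L hL haL hbL w hw
  have hcol : ∀ z ∈ M, Col Pol.lines z w := by
    intro z hz
    rcases Pol.one_or_all z L hL with ⟨u, _, huniq⟩ | hall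
    · exact absurd ((huniq a ⟨haL, hMmax.prop.1 z hz a ha⟩).trans
        (huniq b ⟨hbL, hMmax.prop.1 z hz b hb⟩).symm) hab
    · exact hall w hw
  have hcl : Cliq Pol.lines (insert w M) := by
    intro x hx y hy
    rcases hx with rfl | hx
    · rcases hy with rfl | hy
      · exact col_refl _ _
      · exact col_symm (hcol y hy)
    · rcases hy with rfl | hy
      · exact hcol x hx
      · exact hMmax.prop.1 x hx y hy
  have : insert w M ⊆ M :=
    hMmax.2 ⟨hcl, hMmax.prop.2.trans (subset_insert w M)⟩ (subset_insert w M)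
  exact this (mem_insert w M)

lemma flag_sUnion {lines : Set (Set P)} {c : Set (Set (Set P))}
    (hc : ∀ F ∈ c, IsFlag lines F) (hchain : IsChain (· ⊆ ·) c) :
    IsFlag lines (⋃₀ c) := by
  constructor
  · rintro T ⟨F1, hF1, hT⟩ U ⟨F2, hF2, hU⟩ hne
    rcases hchain.total hF1 hF2 with h | h
    · exact (hc F2 hF2).1 (h hT) hU hne
    · exact (hc F1 hF1).1 hT (h hU) hne
  · rintro T ⟨F1, hF1, hT⟩
    exact (hc F1 hF1).2 T hT

lemma exists_max_flag {F₀ : Set (Set P)} (h : IsFlag Pol.lines F₀) :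
    ∃ F, F₀ ⊆ F ∧ IsFlag Pol.lines F ∧ ∀ F', IsFlag Pol.lines F' → F ⊆ F' → F = F' := by
  obtain ⟨F, hF₀F, hFmax⟩ := zorn_subset_nonempty {F | IsFlag Pol.lines F}
    (fun c hc hchain _ => ⟨⋃₀ c, flag_sUnion (fun F hF => hc hF) hchain,
      fun s hs => subset_sUnion_of_mem hs⟩) F₀ h
  exact ⟨F, hF₀F, hFmax.prop, fun F' hF' hsub => hsub.antisymm (hFmax.2 hF' hsub)⟩

lemma flag_finite_card_le (hn : n ≠ 0) {F₀ : Set (Set P)} (h : IsFlag Pol.lines F₀) :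
    F₀.Finite ∧ F₀.ncard ≤ n := by
  obtain ⟨F, hsub, hF, hmax⟩ := exists_max_flag Pol h
  have hcard : F.ncard = n := Pol.flag_card F hF hmax
  have hfin : F.Finite := by
    by_contra hinf
    rw [Set.Infinite.ncard (fun hh => hinf hh)] at hcard
    exact hn hcard.symm
  exact ⟨hfin.subset hsub, hcard ▸ Set.ncard_le_ncard hsub hfin⟩

/-- extension of flags inside a subspace S, keeping a given flag C -/
lemma exists_max_flagIn {S : Set P} {C : Set (Set P)} (h : IsFlagIn Pol.lines S C) :
    ∃ C', C ⊆ C' ∧ IsFlagIn Pol.lines S C' ∧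
      ∀ C'', IsFlagIn Pol.lines S C'' → C' ⊆ C'' → C' = C'' := by
  obtain ⟨C', hCC', hmax⟩ := zorn_subset_nonempty {F | IsFlagIn Pol.lines S F ∧ C ⊆ F}
    (fun c hc hchain hcne => ⟨⋃₀ c,
      ⟨⟨flag_sUnion (fun F hF => (hc hF).1.1) hchain,
        by rintro T ⟨F1, hF1, hT⟩; exact (hc hF1).1.2 T hT⟩,
       hcne.elim fun s hs => (hc hs).2.trans (subset_sUnion_of_mem hs)⟩,
      fun s hs => subset_sUnion_of_mem hs⟩) C ⟨h, subset_rfl⟩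
  refine ⟨C', hCC', hmax.prop.1, fun C'' hC'' hsub => ?_⟩
  exact hsub.antisymm (hmax.2 ⟨hC'', hCC'.trans hsub⟩ hsub)

/-! ### Index combinatorics for bases -/

/-- index sets containing no σ-pair -/
def SingF {m : ℕ} (σ : Fin m → Fin m) (K : Finset (Fin m)) : Prop := ∀ a ∈ K, σ a ∉ K

section BaseLayer

variable {q : Fin (2 * n) → P} {σ : Fin (2 * n) → Fin (2 * n)}
variable (hσ : ∀ a b, Col Pol.lines (q a) (q b) ↔ b ≠ σ a)
variable (hinv : ∀ a, σ (σ a) = a)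

include hσ in
lemma sigma_ne (a : Fin (2 * n)) : σ a ≠ a :=
  fun h => ((hσ a a).1 (col_refl _ _)) h.symm

include hinv in
lemma sigma_inj : Function.Injective σ := by
  intro a b h
  rw [← hinv a, ← hinv b, h]

include hσ in
lemma not_col_sigma (a : Fin (2 * n)) : ¬ Col Pol.lines (q a) (q (σ a)) := by
  intro h
  exact (hσ a (σ a)).1 h rfl

include hσ hinv in
lemma col_of_ne_sigma {a b : Fin (2 * n)} (h : a ≠ σ b) : Col Pol.lines (q b) (q a) :=
  (hσ b a).2 h

include hσ hinv in
/-- the span of points indexed away from c lies in the perp of `q (σ c)` -/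
lemma span_subset_perp {A : Set (Fin (2 * n))} {c : Fin (2 * n)} (hc : c ∉ A) :
    span Pol.lines (q '' A) ⊆ {y | Col Pol.lines (q (σ c)) y} := by
  apply span_subset_of (isSubspace_perp Pol (q (σ c)))
  rintro x ⟨a, ha, rfl⟩
  refine (hσ (σ c) a).2 (fun h => ?_)
  rw [h, hinv] at ha
  exact hc ha

include hσ hinv in
lemma sep1 {A : Set (Fin (2 * n))} {c : Fin (2 * n)} (hc : c ∉ A) :
    q c ∉ span Pol.lines (q '' A) := by
  intro h
  have := span_subset_perp Pol hσ hinv hc h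
  rw [mem_setOf_eq] at this
  exact ((hσ (σ c) c).1 this) (hinv c).symm

include hσ hinv in
lemma sep2 {A : Set (Fin (2 * n))} {c : Fin (2 * n)} {x : P}
    (hx : Col Pol.lines (q (σ c)) x) (hc : c ∉ A) :
    q c ∉ span Pol.lines (insert x (q '' A)) := by
  intro h
  have hsub : span Pol.lines (insert x (q '' A)) ⊆ {y | Col Pol.lines (q (σ c)) y} := by
    apply span_subset_of (isSubspace_perp Pol (q (σ c)))
    rintro z (rfl | ⟨a, ha, rfl⟩)
    · exact hx
    · refine (hσ (σ c) a).2 (fun h' => ?_)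
      rw [h', hinv] at ha
      exact hc ha
  exact ((hσ (σ c) c).1 (hsub h)) (hinv c).symm

include hσ hinv in
lemma singF_cliq {K : Finset (Fin (2 * n))} (hK : SingF σ K) :
    Cliq Pol.lines (q '' ↑K) := by
  rintro x ⟨a, ha, rfl⟩ y ⟨b, hb, rfl⟩
  refine (hσ a b).2 (fun h => ?_)
  rw [h] at hb
  exact hK a (by exact_mod_cast ha) (by exact_mod_cast hb)

include hσ hinv in
lemma singF_card_le {K : Finset (Fin (2 * n))} (hK : SingF σ K) : K.card ≤ n := by
  classical
  have hdisj : Disjoint K (K.image σ) := by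
    rw [Finset.disjoint_right]
    rintro a ha haK
    obtain ⟨b, hb, rfl⟩ := Finset.mem_image.1 ha
    exact hK b hb haK
  have himg : (K.image σ).card = K.card := Finset.card_image_of_injective K (sigma_inj hinv)
  have : (K ∪ K.image σ).card ≤ Fintype.card (Fin (2 * n)) := Finset.card_le_univ _
  rw [Finset.card_union_of_disjoint hdisj, himg, Fintype.card_fin] at this
  omega

include hσ hinv in
lemma singF_extend {K : Finset (Fin (2 * n))} (hK : SingF σ K) {s : ℕ}
    (h1 : K.card ≤ s) (h2 : s ≤ n) : ∃ L, K ⊆ L ∧ SingF σ L ∧ L.card = s := by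
  classical
  induction s with
  | zero =>
    exact ⟨K, subset_rfl, hK, le_antisymm h1 (Nat.zero_le _)⟩
  | succ s ih =>
    rcases Nat.lt_or_ge K.card (s+1) with hlt | hge
    · obtain ⟨L, hKL, hLs, hLcard⟩ := ih (by omega) (by omega)
      -- find a fresh index
      have hcard : (L ∪ L.image σ).card < Fintype.card (Fin (2 * n)) := by
        have himg : (L.image σ).card ≤ L.card := Finset.card_image_le
        have := Finset.card_union_le L (L.image σ)
        rw [Fintype.card_fin]
        omega
      obtain ⟨c, hc⟩ : ∃ c, c ∉ L ∪ L.image σ := by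
        by_contra hall
        push_neg at hall
        have : (Finset.univ : Finset (Fin (2 * n))) ⊆ L ∪ L.image σ :=
          fun c _ => hall c
        have := Finset.card_le_card this
        rw [Finset.card_univ] at this
        omega
      rw [Finset.mem_union, not_or] at hc
      refine ⟨insert c L, hKL.trans (Finset.subset_insert c L), ?_, ?_⟩
      · intro a ha
        rcases Finset.mem_insert.1 ha with rfl | ha
        · rw [Finset.mem_insert, not_or]
          constructor
          · exact fun h => (sigma_ne Pol hσ a) h
          · intro h
            exact hc.2 (Finset.mem_image.2 ⟨σ a, h, hinv a⟩)
        · rw [Finset.mem_insert, not_or]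
          exact ⟨fun h => hc.2 (Finset.mem_image.2 ⟨a, ha, h⟩), hLs a ha⟩
      · rw [Finset.card_insert_of_notMem hc.1, hLcard]
    · exact ⟨K, subset_rfl, hK, le_antisymm h1 hge⟩

end BaseLayer

/-- chains of finsets interpolating between K and L -/
lemma chain_finsets {ι : Type*} [DecidableEq ι] :
    ∀ (d : ℕ) (K L : Finset ι), K ⊆ L → L.card = K.card + d →
    ∃ f : ℕ → Finset ι, f 0 = K ∧ (∀ t, d ≤ t → f t = L) ∧
      (∀ s t, s ≤ t → f s ⊆ f t) ∧ (∀ t, t ≤ d → (f t).card = K.card + t) := by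
  intro d
  induction d with
  | zero =>
    intro K L hKL hcard
    have : K = L := Finset.eq_of_subset_of_card_le hKL (by omega)
    subst this
    exact ⟨fun _ => K, rfl, fun t _ => rfl, fun _ _ _ => subset_rfl,
      fun t ht => by simp; omega⟩
  | succ d ih =>
    intro K L hKL hcard
    obtain ⟨K', hKK', hK'L, hK'card⟩ :=
      Finset.exists_subsuperset_card_eq hKL (by omega : K.card ≤ 1 + K.card) (by omega)
    obtain ⟨f, hf0, hftop, hfmono, hfcard⟩ := ih K' L hK'L (by omega)
    refine ⟨fun t => if t = 0 then K else f (t - 1), by simp, ?_, ?_, ?_⟩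
    · intro t ht
      have : t ≠ 0 := by omega
      simp only [this, if_false]
      exact hftop (t-1) (by omega)
    · intro s t hst
      by_cases hs : s = 0
      · subst hs
        by_cases ht : t = 0
        · simp [ht]
        · simp only [ht, if_false, if_true, if_pos rfl]
          exact (hKK'.trans (hf0 ▸ hfmono 0 (t-1) (by omega)))
      · have ht : t ≠ 0 := by omega
        simp only [hs, ht, if_false]
        exact hfmono (s-1) (t-1) (by omega)
    · intro t ht
      by_cases hs : t = 0
      · simp [hs]
      · simp only [hs, if_false]
        rw [hfcard (t-1) (by omega), hK'card]
        omega

section BaseLayer2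

variable {q : Fin (2 * n) → P} {σ : Fin (2 * n) → Fin (2 * n)}
variable (hσ : ∀ a b, Col Pol.lines (q a) (q b) ↔ b ≠ σ a)
variable (hinv : ∀ a, σ (σ a) = a)

include hσ hinv in
/-- Key engine: a point collinear with `q m` for all `m` outside `σ '' K`
lies in the span of the points indexed by `K`. -/
lemma mem_span_of_perp (hn : n ≠ 0) {K : Finset (Fin (2 * n))} (hK : SingF σ K) {x : P}
    (hx : ∀ m, σ m ∉ K → Col Pol.lines (q m) x) : x ∈ span Pol.lines (q '' ↑K) := by
  classical
  by_contra hxK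
  have hKn : K.card ≤ n := singF_card_le Pol hσ hinv hK
  obtain ⟨L, hKL, hLs, hLcard⟩ := singF_extend Pol hσ hinv hK hKn le_rfl
  obtain ⟨g, hg0, hgtop, hgmono, hgcard⟩ := chain_finsets (n - K.card) K L hKL (by omega)
  obtain ⟨f, hf0, hftop, hfmono, hfcard⟩ :=
    chain_finsets K.card ∅ K (Finset.empty_subset K) (by simp)
  have hxL : ∀ a ∈ L, Col Pol.lines (q a) x :=
    fun a ha => hx a (fun hmem => hLs a ha (hKL hmem))
  have hxsep : ∀ a ∈ L, a ∉ K → Col Pol.lines (q (σ a)) x :=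
    fun a _ haK => hx (σ a) (by rw [hinv]; exact haK)
  have hcliq : Cliq Pol.lines (insert x (q '' ↑L)) := by
    rintro z (rfl | ⟨a, ha, rfl⟩) w (rfl | ⟨b, hb, rfl⟩)
    · exact col_refl _ _
    · exact col_symm (hxL b (by exact_mod_cast hb))
    · exact hxL a (by exact_mod_cast ha)
    · exact singF_cliq Pol hσ hinv hLs _ ⟨a, ha, rfl⟩ _ ⟨b, hb, rfl⟩
  obtain ⟨M, hLM, hMcl, hMsub⟩ := exists_max_clique Pol hcliq
  set T1 : ℕ → Set P := fun t => span Pol.lines (q '' ↑(f t)) with hT1def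
  set T2 : ℕ → Set P := fun t => span Pol.lines (insert x (q '' ↑(g t))) with hT2def
  have hfK : ∀ t, f t ⊆ K := by
    intro t
    rcases le_total t K.card with h | h
    · rw [← hftop K.card le_rfl]; exact hfmono t K.card h
    · rw [hftop t h]
  have hgL : ∀ t, g t ⊆ L := by
    intro t
    rcases le_total t (n - K.card) with h | h
    · rw [← hgtop (n - K.card) le_rfl]; exact hgmono t (n - K.card) h
    · rw [hgtop t h]
  have hT1M : ∀ t, T1 t ⊆ M := by
    intro t
    apply span_subset_of hMsub
    refine (Set.image_mono (f := q) ?_).trans ((subset_insert _ _).trans hLM)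
    exact_mod_cast (hfK t).trans hKL
  have hT2M : ∀ t, T2 t ⊆ M := by
    intro t
    apply span_subset_of hMsub
    rintro z (rfl | ⟨a, ha, rfl⟩)
    · exact hLM (mem_insert _ _)
    · exact hLM (Or.inr ⟨a, by exact_mod_cast (hgL t (by exact_mod_cast ha)), rfl⟩)
  have hT2M' : ∀ t, insert x (q '' ↑(g t)) ⊆ M := fun t =>
    (subset_span Pol.lines _).trans (hT2M t)
  have hT1mono : ∀ s t, s ≤ t → T1 s ⊆ T1 t := by
    intro s t h
    exact span_mono (Set.image_mono (f := q) (by exact_mod_cast hfmono s t h))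
  have hT2mono : ∀ s t, s ≤ t → T2 s ⊆ T2 t := by
    intro s t h
    exact span_mono (insert_subset_insert (Set.image_mono (f := q) (by exact_mod_cast hgmono s t h)))
  have hT1T2 : ∀ s t, T1 s ⊆ T2 t := by
    intro s t
    have h1 : T1 s ⊆ span Pol.lines (q '' ↑(g 0)) := by
      rw [hg0]
      exact span_mono (Set.image_mono (f := q) (by exact_mod_cast hfK s))
    have h2 : span Pol.lines (q '' ↑(g 0)) ⊆ T2 0 :=
      span_mono (subset_insert _ _)
    exact (h1.trans h2).trans (hT2mono 0 t (Nat.zero_le t))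
  have hxT1 : ∀ s, x ∉ T1 s := by
    intro s hmem
    apply hxK
    have : T1 s ⊆ span Pol.lines (q '' ↑K) :=
      span_mono (Set.image_mono (f := q) (by exact_mod_cast hfK s))
    exact this hmem
  have hxT2 : ∀ t, x ∈ T2 t := fun t => subset_span Pol.lines _ (mem_insert _ _)
  have pt1 : ∀ s t, s < t → t ≤ K.card → ∃ z, z ∈ T1 t ∧ z ∉ T1 s := by
    intro s t hst ht
    have hcs : (f s).card = s := by rw [hfcard s (by omega)]; simp
    have hct : (f t).card = t := by rw [hfcard t ht]; simp
    have : ¬ (f t ⊆ f s) := fun h => by have := Finset.card_le_card h; omega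
    obtain ⟨a, hat, has⟩ := Finset.not_subset.1 this
    exact ⟨q a, subset_span Pol.lines _ ⟨a, by exact_mod_cast hat, rfl⟩,
      sep1 Pol hσ hinv (by exact_mod_cast has)⟩
  have pt2 : ∀ s t, s < t → t ≤ n - K.card → ∃ z, z ∈ T2 t ∧ z ∉ T2 s := by
    intro s t hst ht
    have hcs : (g s).card = K.card + s := hgcard s (by omega)
    have hct : (g t).card = K.card + t := hgcard t ht
    have : ¬ (g t ⊆ g s) := fun h => by have := Finset.card_le_card h; omega
    obtain ⟨a, hat, has⟩ := Finset.not_subset.1 this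
    have haK : a ∉ K := fun h => has (by rw [← hg0] at h; exact hgmono 0 s (Nat.zero_le s) h)
    refine ⟨q a, subset_span Pol.lines _ (Or.inr ⟨a, by exact_mod_cast hat, rfl⟩),
      sep2 Pol hσ hinv (hxsep a (hgL t hat) haK) (by exact_mod_cast has)⟩
  -- the flag
  set F0 : Set (Set P) := T1 '' (Set.Icc 1 K.card) ∪ T2 '' (Set.Icc 0 (n - K.card)) with hF0def
  have hflag : IsFlag Pol.lines F0 := by
    constructor
    · rintro S1 (⟨s, hs, rfl⟩ | ⟨s, hs, rfl⟩) S2 (⟨t, ht, rfl⟩ | ⟨t, ht, rfl⟩) hne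
      · rcases le_total s t with h | h
        · exact Or.inl (hT1mono s t h)
        · exact Or.inr (hT1mono t s h)
      · exact Or.inl (hT1T2 s t)
      · exact Or.inr (hT1T2 t s)
      · rcases le_total s t with h | h
        · exact Or.inl (hT2mono s t h)
        · exact Or.inr (hT2mono t s h)
    · rintro T (⟨t, ht, rfl⟩ | ⟨t, ht, rfl⟩)
      · refine ⟨isSingular_of_subset_cliq Pol (span_isSubspace _ _) (hT1M t) hMcl, ?_⟩
        have hct : (f t).card = t := by rw [hfcard t ht.2]; simp
        have ht1 : 1 ≤ t := ht.1
        have : (f t).Nonempty := Finset.card_pos.1 (by omega)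
        obtain ⟨a, ha⟩ := this
        exact ⟨q a, subset_span Pol.lines _ ⟨a, by exact_mod_cast ha, rfl⟩⟩
      · exact ⟨isSingular_of_subset_cliq Pol (span_isSubspace _ _) (hT2M t) hMcl,
          ⟨x, hxT2 t⟩⟩
  -- cardinality
  have hinj1 : Set.InjOn T1 (Set.Icc 1 K.card) := by
    intro s hs t ht heq
    by_contra hne
    rcases Nat.lt_or_ge s t with h | h
    · obtain ⟨z, hzt, hzs⟩ := pt1 s t h ht.2
      rw [heq] at hzs; exact hzs hzt
    · obtain ⟨z, hzt, hzs⟩ := pt1 t s (by omega) hs.2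
      rw [← heq] at hzs; exact hzs hzt
  have hinj2 : Set.InjOn T2 (Set.Icc 0 (n - K.card)) := by
    intro s hs t ht heq
    by_contra hne
    rcases Nat.lt_or_ge s t with h | h
    · obtain ⟨z, hzt, hzs⟩ := pt2 s t h ht.2
      rw [heq] at hzs; exact hzs hzt
    · obtain ⟨z, hzt, hzs⟩ := pt2 t s (by omega) hs.2
      rw [← heq] at hzs; exact hzs hzt
  have hdisj : Disjoint (T1 '' (Set.Icc 1 K.card)) (T2 '' (Set.Icc 0 (n - K.card))) := by
    rw [Set.disjoint_left]
    rintro S ⟨s, hs, rfl⟩ ⟨t, ht, heq⟩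
    exact hxT1 s (heq ▸ hxT2 t)
  have hc1 : (T1 '' (Set.Icc 1 K.card)).ncard = K.card := by
    rw [Set.ncard_image_of_injOn hinj1, ← Finset.coe_Icc, Set.ncard_coe_finset,
      Nat.card_Icc]
    omega
  have hc2 : (T2 '' (Set.Icc 0 (n - K.card))).ncard = n - K.card + 1 := by
    rw [Set.ncard_image_of_injOn hinj2, ← Finset.coe_Icc, Set.ncard_coe_finset,
      Nat.card_Icc]
    omega
  have hcF0 : F0.ncard = n + 1 := by
    rw [hF0def, Set.ncard_union_eq hdisj ((Set.finite_Icc _ _).image _)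
      ((Set.finite_Icc _ _).image _), hc1, hc2]
    omega
  obtain ⟨_, hle⟩ := flag_finite_card_le Pol hn hflag
  omega

end BaseLayer2

section BaseLayer3

variable {q : Fin (2 * n) → P} {σ : Fin (2 * n) → Fin (2 * n)}
variable (hσ : ∀ a b, Col Pol.lines (q a) (q b) ↔ b ≠ σ a)
variable (hinv : ∀ a, σ (σ a) = a)

include hσ hinv in
/-- the span of k+1 points of a base in mutually distinct, non-paired positions
is a singular subspace of dimension k -/
lemma hasDim_span (hn : n ≠ 0) {A : Finset (Fin (2 * n))} (hA : SingF σ A) (hA0 : A.Nonempty) :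
    HasDim Pol.lines (span Pol.lines (q '' ↑A)) ((A.card : ℤ) - 1) := by
  classical
  have hAn : A.card ≤ n := singF_card_le Pol hσ hinv hA
  obtain ⟨L, hAL, hLs, hLcard⟩ := singF_extend Pol hσ hinv hA hAn le_rfl
  obtain ⟨g, hg0, hgtop, hgmono, hgcard⟩ := chain_finsets (n - A.card) A L hAL (by omega)
  obtain ⟨f, hf0, hftop, hfmono, hfcard⟩ :=
    chain_finsets A.card ∅ A (Finset.empty_subset A) (by simp)
  obtain ⟨M, hLM, hMcl, hMsub⟩ := exists_max_clique Pol (singF_cliq Pol hσ hinv hLs)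
  set S : Set P := span Pol.lines (q '' ↑A) with hSdef
  set T1 : ℕ → Set P := fun t => span Pol.lines (q '' ↑(f t)) with hT1def
  set T2 : ℕ → Set P := fun t => span Pol.lines (q '' ↑(g t)) with hT2def
  have hfA : ∀ t, f t ⊆ A := by
    intro t
    rcases le_total t A.card with h | h
    · rw [← hftop A.card le_rfl]; exact hfmono t A.card h
    · rw [hftop t h]
  have hgL : ∀ t, g t ⊆ L := by
    intro t
    rcases le_total t (n - A.card) with h | h
    · rw [← hgtop (n - A.card) le_rfl]; exact hgmono t (n - A.card) h
    · rw [hgtop t h]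
  have hsubM : ∀ (B : Finset (Fin (2 * n))), B ⊆ L → span Pol.lines (q '' ↑B) ⊆ M := by
    intro B hB
    apply span_subset_of hMsub
    exact (Set.image_mono (f := q) (by exact_mod_cast hB)).trans hLM
  have hT1S : ∀ t, T1 t ⊆ S := fun t =>
    span_mono (Set.image_mono (f := q) (by exact_mod_cast hfA t))
  have hST2 : ∀ t, S ⊆ T2 t := fun t =>
    span_mono (Set.image_mono (f := q) (by exact_mod_cast (hg0 ▸ hgmono 0 t (Nat.zero_le t))))
  have hT1mono : ∀ s t, s ≤ t → T1 s ⊆ T1 t := fun s t h =>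
    span_mono (Set.image_mono (f := q) (by exact_mod_cast hfmono s t h))
  have hT2mono : ∀ s t, s ≤ t → T2 s ⊆ T2 t := fun s t h =>
    span_mono (Set.image_mono (f := q) (by exact_mod_cast hgmono s t h))
  have pt1 : ∀ s t, s < t → t ≤ A.card → ∃ z, z ∈ T1 t ∧ z ∉ T1 s := by
    intro s t hst ht
    have hcs : (f s).card = s := by rw [hfcard s (by omega)]; simp
    have hct : (f t).card = t := by rw [hfcard t ht]; simp
    have : ¬ (f t ⊆ f s) := fun h => by have := Finset.card_le_card h; omega
    obtain ⟨a, hat, has⟩ := Finset.not_subset.1 this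
    exact ⟨q a, subset_span Pol.lines _ ⟨a, by exact_mod_cast hat, rfl⟩,
      sep1 Pol hσ hinv (by exact_mod_cast has)⟩
  have pt2 : ∀ s t, s < t → t ≤ n - A.card → ∃ z, z ∈ T2 t ∧ z ∉ T2 s := by
    intro s t hst ht
    have hcs : (g s).card = A.card + s := hgcard s (by omega)
    have hct : (g t).card = A.card + t := hgcard t ht
    have : ¬ (g t ⊆ g s) := fun h => by have := Finset.card_le_card h; omega
    obtain ⟨a, hat, has⟩ := Finset.not_subset.1 this
    exact ⟨q a, subset_span Pol.lines _ ⟨a, by exact_mod_cast hat, rfl⟩,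
      sep1 Pol hσ hinv (by exact_mod_cast has)⟩
  have hqaS : ∀ t, 1 ≤ t → t ≤ n - A.card → ∃ z, z ∈ T2 t ∧ z ∉ S := by
    intro t h1 ht
    have hct : (g t).card = A.card + t := hgcard t ht
    have : ¬ (g t ⊆ A) := fun h => by have := Finset.card_le_card h; omega
    obtain ⟨a, hat, has⟩ := Finset.not_subset.1 this
    exact ⟨q a, subset_span Pol.lines _ ⟨a, by exact_mod_cast hat, rfl⟩,
      sep1 Pol hσ hinv (by exact_mod_cast has)⟩
  set C : Set (Set P) := T1 '' (Set.Icc 1 A.card) with hCdef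
  have hCflagIn : IsFlagIn Pol.lines S C := by
    refine ⟨⟨?_, ?_⟩, ?_⟩
    · rintro S1 ⟨s, hs, rfl⟩ S2 ⟨t, ht, rfl⟩ hne
      rcases le_total s t with h | h
      · exact Or.inl (hT1mono s t h)
      · exact Or.inr (hT1mono t s h)
    · rintro T ⟨t, ht, rfl⟩
      refine ⟨isSingular_of_subset_cliq Pol (span_isSubspace _ _)
        ((hT1S t).trans (hsubM A hAL)) hMcl, ?_⟩
      have ht1 : 1 ≤ t := ht.1
      have hct : (f t).card = t := by rw [hfcard t ht.2]; simp
      obtain ⟨a, ha⟩ := Finset.card_pos.1 (show 0 < (f t).card by omega)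
      exact ⟨q a, subset_span Pol.lines _ ⟨a, by exact_mod_cast ha, rfl⟩⟩
    · rintro T ⟨t, ht, rfl⟩
      exact hT1S t
  obtain ⟨Cm, hCCm, hCmIn, hCmmax⟩ := exists_max_flagIn Pol hCflagIn
  set E : Set (Set P) := T2 '' (Set.Icc 1 (n - A.card)) with hEdef
  have hF0flag : IsFlag Pol.lines (Cm ∪ E) := by
    constructor
    · rintro S1 (h1 | ⟨s, hs, rfl⟩) S2 (h2 | ⟨t, ht, rfl⟩) hne
      · exact hCmIn.1.1 h1 h2 hne
      · exact Or.inl ((hCmIn.2 S1 h1).trans (hST2 t))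
      · exact Or.inr ((hCmIn.2 S2 h2).trans (hST2 s))
      · rcases le_total s t with h | h
        · exact Or.inl (hT2mono s t h)
        · exact Or.inr (hT2mono t s h)
    · rintro T (h1 | ⟨t, ht, rfl⟩)
      · exact hCmIn.1.2 T h1
      · refine ⟨isSingular_of_subset_cliq Pol (span_isSubspace _ _) (hsubM (g t) (hgL t)) hMcl, ?_⟩
        obtain ⟨z, hz, _⟩ := hqaS t ht.1 ht.2
        exact ⟨z, hz⟩
  obtain ⟨F, hF0F, hFflag, hFmax⟩ := exists_max_flag Pol hF0flag
  have hFcard : F.ncard = n := Pol.flag_card F hFflag hFmax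
  have hFfin : F.Finite := by
    by_contra hinf
    rw [Set.Infinite.ncard (fun hh => hinf hh)] at hFcard
    exact hn hFcard.symm
  have hinj2 : Set.InjOn T2 (Set.Icc 1 (n - A.card)) := by
    intro s hs t ht heq
    by_contra hne
    rcases Nat.lt_or_ge s t with h | h
    · obtain ⟨z, hzt, hzs⟩ := pt2 s t h ht.2
      rw [heq] at hzs; exact hzs hzt
    · obtain ⟨z, hzt, hzs⟩ := pt2 t s (by omega) hs.2
      rw [← heq] at hzs; exact hzs hzt
  have hinj1 : Set.InjOn T1 (Set.Icc 1 A.card) := by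
    intro s hs t ht heq
    by_contra hne
    rcases Nat.lt_or_ge s t with h | h
    · obtain ⟨z, hzt, hzs⟩ := pt1 s t h ht.2
      rw [heq] at hzs; exact hzs hzt
    · obtain ⟨z, hzt, hzs⟩ := pt1 t s (by omega) hs.2
      rw [← heq] at hzs; exact hzs hzt
  have hdisj : Disjoint Cm E := by
    rw [Set.disjoint_left]
    rintro T hT ⟨t, ht, heq⟩
    obtain ⟨z, hzt, hzS⟩ := hqaS t ht.1 ht.2
    exact hzS (hCmIn.2 T hT (heq ▸ hzt))
  have hcE : E.ncard = n - A.card := by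
    rw [hEdef, Set.ncard_image_of_injOn hinj2, ← Finset.coe_Icc, Set.ncard_coe_finset,
      Nat.card_Icc]
    omega
  have hcC : C.ncard = A.card := by
    rw [hCdef, Set.ncard_image_of_injOn hinj1, ← Finset.coe_Icc, Set.ncard_coe_finset,
      Nat.card_Icc]
    omega
  have hCmfin : Cm.Finite := hFfin.subset ((subset_union_left).trans hF0F)
  have hcup : Cm.ncard + E.ncard ≤ n := by
    rw [← Set.ncard_union_eq hdisj hCmfin (hFfin.subset ((subset_union_right).trans hF0F))]
    exact hFcard ▸ Set.ncard_le_ncard hF0F hFfin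
  have hCmle : Cm.ncard ≤ A.card := by omega
  have hCmge : A.card ≤ Cm.ncard := hcC ▸ Set.ncard_le_ncard hCCm hCmfin
  refine ⟨isSingular_of_subset_cliq Pol (span_isSubspace _ _) (hsubM A hAL) hMcl,
    Cm, hCmIn, hCmmax, hCmfin, ?_⟩
  have : Cm.ncard = A.card := le_antisymm hCmle hCmge
  rw [this]
  have : 1 ≤ A.card := Finset.card_pos.2 hA0
  omega

end BaseLayer3

/-- a maximal singular subspace admits no proper singular superspace -/
lemma maximal_singular (hn : 3 ≤ n) {M W : Set P}
    (hM : HasDim Pol.lines M ((n : ℤ) - 1)) (hW : IsSingular Pol.lines W)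
    (hMW : M ⊆ W) (hne : M ≠ W) : False := by
  obtain ⟨hMsing, CM, hCMIn, hCMmax, hCMfin, hCMcard⟩ := hM
  have hcard : CM.ncard = n := by
    have : (CM.ncard : ℤ) = (n : ℤ) := by omega
    exact_mod_cast this
  have hCMne : CM.Nonempty := Set.nonempty_of_ncard_ne_zero (by omega)
  have hWne : W.Nonempty := by
    obtain ⟨T, hT⟩ := hCMne
    obtain ⟨z, hz⟩ := (hCMIn.1.2 T hT).2
    exact ⟨z, hMW (hCMIn.2 T hT hz)⟩
  have hWCM : W ∉ CM := by
    intro h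
    exact hne (hMW.antisymm (hCMIn.2 W h))
  have hflag : IsFlag Pol.lines (insert W CM) := by
    constructor
    · rintro S1 (rfl | h1) S2 (rfl | h2) hne2
      · exact Or.inl subset_rfl
      · exact Or.inr ((hCMIn.2 S2 h2).trans hMW)
      · exact Or.inl ((hCMIn.2 S1 h1).trans hMW)
      · exact hCMIn.1.1 h1 h2 hne2
    · rintro T (rfl | h1)
      · exact ⟨hW, hWne⟩
      · exact hCMIn.1.2 T h1
  obtain ⟨hfin, hle⟩ := flag_finite_card_le Pol (by omega) hflag
  rw [Set.ncard_insert_of_notMem hWCM (hfin.subset (subset_insert _ _)), hcard] at hle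
  omega

section BaseLayer4

variable {q : Fin (2 * n) → P} {σ : Fin (2 * n) → Fin (2 * n)}
variable (hσ : ∀ a b, Col Pol.lines (q a) (q b) ↔ b ≠ σ a)
variable (hinv : ∀ a, σ (σ a) = a)

include hσ hinv in
/-- spans of base index sets intersect along the common indices -/
lemma span_inter (hn : n ≠ 0) {I J : Finset (Fin (2 * n))}
    (hI : SingF σ I) (hJ : SingF σ J) :
    span Pol.lines (q '' ↑I) ∩ span Pol.lines (q '' ↑J) =
      span Pol.lines (q '' ↑(I ∩ J)) := by
  classical
  apply subset_antisymm
  · rintro x ⟨hxI, hxJ⟩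
    apply mem_span_of_perp Pol hσ hinv hn
      (fun a ha => hI a (Finset.mem_of_mem_inter_left ha) ∘ Finset.mem_of_mem_inter_left ∘ id)
    · intro m hm
      rw [Finset.mem_inter, not_and_or] at hm
      rcases hm with hm | hm
      · have := span_subset_perp Pol hσ hinv (c := σ m) (A := ↑I) (by exact_mod_cast hm) hxI
        rw [mem_setOf_eq, hinv] at this
        exact this
      · have := span_subset_perp Pol hσ hinv (c := σ m) (A := ↑J) (by exact_mod_cast hm) hxJ
        rw [mem_setOf_eq, hinv] at this
        exact this
  · apply subset_inter
    · exact span_mono (Set.image_mono (f := q) (by exact_mod_cast Finset.inter_subset_left))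
    · exact span_mono (Set.image_mono (f := q) (by exact_mod_cast Finset.inter_subset_right))

end BaseLayer4

section TopLayer

lemma exists_partner {p : Fin (2 * n) → P} (hp : IsBase Pol.lines p) :
    ∃ σ : Fin (2 * n) → Fin (2 * n),
      (∀ a b, Col Pol.lines (p a) (p b) ↔ b ≠ σ a) ∧ (∀ a, σ (σ a) = a) := by
  have h2 := hp.2
  choose σ hspec huniq using h2
  have hiff : ∀ a b, Col Pol.lines (p a) (p b) ↔ b ≠ σ a := by
    intro a b
    constructor
    · intro hcol hbe
      exact (hbe ▸ hspec a) hcol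
    · intro hbe
      by_contra h
      exact hbe (huniq a b h)
  refine ⟨σ, hiff, fun a => ?_⟩
  exact (huniq (σ a) a (fun h => hspec a (col_symm h))).symm

lemma span_mem_baseSubset {p : Fin (2 * n) → P} {σ : Fin (2 * n) → Fin (2 * n)}
    (hσ : ∀ a b, Col Pol.lines (p a) (p b) ↔ b ≠ σ a) (hinv : ∀ a, σ (σ a) = a)
    (hn : n ≠ 0) {k : ℕ} {A : Finset (Fin (2 * n))} (hA : SingF σ A)
    (hcard : A.card = k + 1) :
    span Pol.lines (p '' ↑A) ∈ baseSubset Pol.lines p (k : ℤ) := by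
  refine ⟨?_, ⟨(↑A : Set (Fin (2 * n))), rfl⟩⟩
  have h := hasDim_span Pol hσ hinv hn hA (Finset.card_pos.1 (by omega))
  rw [hcard] at h
  have h2 : ((k + 1 : ℕ) : ℤ) - 1 = (k : ℤ) := by push_cast; ring
  rwa [h2] at h

lemma baseSubset_unpack {p : Fin (2 * n) → P} {σ : Fin (2 * n) → Fin (2 * n)}
    (hσ : ∀ a b, Col Pol.lines (p a) (p b) ↔ b ≠ σ a) {k : ℤ} {S : Set P}
    (hS : S ∈ baseSubset Pol.lines p k) :
    ∃ J : Finset (Fin (2 * n)), SingF σ J ∧ S = span Pol.lines (p '' ↑J) := by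
  classical
  obtain ⟨hdim, I, rfl⟩ := hS
  have hI : I.Finite := Set.toFinite I
  refine ⟨hI.toFinset, ?_, by rw [Set.Finite.coe_toFinset]⟩
  intro a ha hsa
  rw [Set.Finite.mem_toFinset] at ha hsa
  have h1 : p a ∈ span Pol.lines (p '' I) := subset_span _ _ ⟨a, ha, rfl⟩
  have h2 : p (σ a) ∈ span Pol.lines (p '' I) := subset_span _ _ ⟨σ a, hsa, rfl⟩
  have := hdim.1.2 (p a) h1 (p (σ a)) h2
  exact (hσ a (σ a)).1 this rfl

lemma baseSubset_subset_of_range {p q' : Fin (2 * n) → P}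
    (h : Set.range q' ⊆ Set.range p) (k : ℤ) :
    baseSubset Pol.lines q' k ⊆ baseSubset Pol.lines p k := by
  rintro S ⟨hdim, J, rfl⟩
  refine ⟨hdim, {l | p l ∈ q' '' J}, ?_⟩
  have himg : q' '' J = p '' {l | p l ∈ q' '' J} := by
    apply subset_antisymm
    · rintro z ⟨j, hj, rfl⟩
      obtain ⟨l, hl⟩ := h (Set.mem_range_self j)
      exact ⟨l, by rw [mem_setOf_eq, hl]; exact ⟨j, hj, rfl⟩, hl⟩
    · rintro z ⟨l, hl, rfl⟩
      exact hl
  nth_rewrite 1 [himg]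
  rfl

lemma baseSubset_eq_of_range {p q' : Fin (2 * n) → P}
    (h : Set.range q' = Set.range p) (k : ℤ) :
    baseSubset Pol.lines q' k = baseSubset Pol.lines p k :=
  subset_antisymm (baseSubset_subset_of_range Pol h.le k)
    (baseSubset_subset_of_range Pol h.ge k)

end TopLayer

lemma singF_subset {σ : Fin (2 * n) → Fin (2 * n)} {K L : Finset (Fin (2 * n))}
    (hL : SingF σ L) (hKL : K ⊆ L) : SingF σ K :=
  fun a ha hsa => hL a (hKL ha) (hKL hsa)

/-- In a type C polar space, for any pair `{i, σ i}` of a base there is a point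
noncollinear to both `p i` and `p (σ i)` but collinear to all other base points. -/
lemma exists_good_point (hn : 3 ≤ n) (hC : TypeC Pol.lines n)
    {p : Fin (2 * n) → P} {σ : Fin (2 * n) → Fin (2 * n)}
    (hσ : ∀ a b, Col Pol.lines (p a) (p b) ↔ b ≠ σ a) (hinv : ∀ a, σ (σ a) = a)
    (i : Fin (2 * n)) :
    ∃ x : P, (∀ l, l ≠ i → l ≠ σ i → Col Pol.lines x (p l)) ∧
      ¬ Col Pol.lines x (p i) ∧ ¬ Col Pol.lines x (p (σ i)) := by
  classical
  have hn0 : n ≠ 0 := by omega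
  have hsingi : SingF σ {i} := by
    intro a ha hsa
    rw [Finset.mem_singleton] at ha hsa
    exact sigma_ne Pol hσ i (ha ▸ hsa)
  obtain ⟨K', hiK', hK's, hK'card⟩ := singF_extend Pol hσ hinv hsingi
    (by simp; omega) le_rfl
  have hiK : i ∈ K' := hiK' (Finset.mem_singleton_self i)
  set D : Finset (Fin (2 * n)) := K'.erase i with hDdef
  have hDK' : D ⊆ K' := Finset.erase_subset i K'
  have hDs : SingF σ D := singF_subset hK's hDK'
  have hDcard : D.card = n - 1 := by rw [hDdef, Finset.card_erase_of_mem hiK, hK'card]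
  have hiD : i ∉ D := Finset.notMem_erase i K'
  have hsiK' : σ i ∉ K' := hK's i hiK
  have hsiD : σ i ∉ D := fun h => hsiK' (hDK' h)
  -- covering of indices
  have hcover : ∀ l, l ≠ i → l ≠ σ i → l ∈ D ∨ σ l ∈ D := by
    intro l hl hlsi
    have hdisj : Disjoint K' (K'.image σ) := by
      rw [Finset.disjoint_right]
      rintro a ha haK
      obtain ⟨b, hb, rfl⟩ := Finset.mem_image.1 ha
      exact hK's b hb haK
    have hucard : (K' ∪ K'.image σ).card = Fintype.card (Fin (2 * n)) := by
      rw [Finset.card_union_of_disjoint hdisj,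
        Finset.card_image_of_injective K' (sigma_inj hinv), hK'card, Fintype.card_fin]
      omega
    have huniv : K' ∪ K'.image σ = Finset.univ :=
      Finset.eq_univ_of_card _ hucard
    have : l ∈ K' ∪ K'.image σ := huniv ▸ Finset.mem_univ l
    rcases Finset.mem_union.1 this with h | h
    · exact Or.inl (Finset.mem_erase.2 ⟨hl, h⟩)
    · obtain ⟨a, ha, rfl⟩ := Finset.mem_image.1 h
      refine Or.inr (Finset.mem_erase.2 ⟨?_, by rw [hinv]; exact ha⟩)
      rw [hinv]
      intro h'
      exact hlsi (h' ▸ rfl)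
  set N : Set P := span Pol.lines (p '' ↑D) with hNdef
  have hDne : D.Nonempty := Finset.card_pos.1 (by omega)
  have hNdim : HasDim Pol.lines N ((n : ℤ) - 2) := by
    have h := hasDim_span Pol hσ hinv hn0 hDs hDne
    rw [hDcard, Nat.cast_sub (by omega : 1 ≤ n)] at h
    convert h using 1
    push_cast
    ring
  set A1 : Finset (Fin (2 * n)) := insert i D with hA1def
  set A2 : Finset (Fin (2 * n)) := insert (σ i) D with hA2def
  have hA1 : A1 = K' := by rw [hA1def, hDdef, Finset.insert_erase hiK]
  have hA1s : SingF σ A1 := hA1 ▸ hK's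
  have hA2s : SingF σ A2 := by
    intro a ha hsa
    rcases Finset.mem_insert.1 ha with rfl | ha
    · rcases Finset.mem_insert.1 hsa with h | h
      · exact sigma_ne Pol hσ (σ i) h
      · rw [hinv] at h; exact hiD h
    · rcases Finset.mem_insert.1 hsa with h | h
      · exact hiD ((sigma_inj hinv h) ▸ ha)
      · exact hDs a ha h
  have hA1card : A1.card = n := by rw [hA1, hK'card]
  have hA2card : A2.card = n := by
    rw [hA2def, Finset.card_insert_of_notMem hsiD, hDcard]
    omega
  set U1 : Set P := span Pol.lines (p '' ↑A1) with hU1def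
  set U2 : Set P := span Pol.lines (p '' ↑A2) with hU2def
  have hU1dim : HasDim Pol.lines U1 ((n : ℤ) - 1) := by
    have h := hasDim_span Pol hσ hinv hn0 hA1s (Finset.card_pos.1 (by omega))
    rwa [hA1card] at h
  have hU2dim : HasDim Pol.lines U2 ((n : ℤ) - 1) := by
    have h := hasDim_span Pol hσ hinv hn0 hA2s (Finset.card_pos.1 (by omega))
    rwa [hA2card] at h
  have hNU1 : N ⊆ U1 := span_mono (Set.image_mono (f := p) (by
    rw [hA1def]; exact_mod_cast Finset.subset_insert i D))
  have hNU2 : N ⊆ U2 := span_mono (Set.image_mono (f := p) (by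
    rw [hA2def]; exact_mod_cast Finset.subset_insert (σ i) D))
  -- the third maximal singular subspace
  obtain ⟨M1, hM1, M2, hM2, M3, hM3, h12, h13, h23, hs1, hs2, hs3⟩ := hC N hNdim
  obtain ⟨M, hM, hNM, hMU1, hMU2⟩ :
      ∃ M, HasDim Pol.lines M ((n : ℤ) - 1) ∧ N ⊆ M ∧ M ≠ U1 ∧ M ≠ U2 := by
    by_cases e1 : M1 = U1
    · by_cases e2 : M2 = U2
      · exact ⟨M3, hM3, hs3, fun h => h13 (e1 ▸ h ▸ rfl), fun h => h23 (e2 ▸ h ▸ rfl)⟩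
      · by_cases e3 : M2 = U1
        · exact absurd (e1.trans e3.symm) h12
        · exact ⟨M2, hM2, hs2, e3, e2⟩
    · by_cases e2 : M1 = U2
      · by_cases e3 : M2 = U2
        · exact absurd (e2.trans e3.symm) h12
        · by_cases e4 : M2 = U1
          · by_cases e5 : M3 = U1
            · exact absurd (e4.trans e5.symm) h23
            · by_cases e6 : M3 = U2
              · exact absurd (e2.trans e6.symm) h13
              · exact ⟨M3, hM3, hs3, e5, e6⟩
          · exact ⟨M2, hM2, hs2, e4, e3⟩
      · exact ⟨M1, hM1, hs1, e1, e2⟩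
  have hMsing : IsSingular Pol.lines M := hM.1
  have hpD_N : ∀ d ∈ D, p d ∈ N := fun d hd => subset_span _ _ ⟨d, by exact_mod_cast hd, rfl⟩
  have hpiM : p i ∉ M := by
    intro h
    have hU1M : U1 ⊆ M := by
      apply span_subset_of hMsing.1
      rintro z ⟨a, ha, rfl⟩
      rw [hA1def] at ha
      rcases Finset.mem_insert.1 (by exact_mod_cast ha) with rfl | ha'
      · exact h
      · exact hNM (hpD_N a ha')
    exact maximal_singular Pol hn hU1dim hMsing hU1M (fun h' => hMU1 h'.symm)
  have hpsiM : p (σ i) ∉ M := by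
    intro h
    have hU2M : U2 ⊆ M := by
      apply span_subset_of hMsing.1
      rintro z ⟨a, ha, rfl⟩
      rw [hA2def] at ha
      rcases Finset.mem_insert.1 (by exact_mod_cast ha) with rfl | ha'
      · exact h
      · exact hNM (hpD_N a ha')
    exact maximal_singular Pol hn hU2dim hMsing hU2M (fun h' => hMU2 h'.symm)
  have hMnotN : ¬ M ⊆ N := by
    intro h
    exact maximal_singular Pol hn hM hU1dim.1 (h.trans hNU1) hMU1
  obtain ⟨z₀, hz₀M, hz₀N⟩ := Set.not_subset.1 hMnotN
  -- correction process
  have hcorr : ∀ E : Finset (Fin (2 * n)), E ⊆ D →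
      ∃ z, z ∈ M ∧ z ∉ N ∧ ∀ d ∈ E, Col Pol.lines z (p (σ d)) := by
    intro E
    induction E using Finset.induction_on with
    | empty => exact fun _ => ⟨z₀, hz₀M, hz₀N, by simp⟩
    | @insert d₀ E hd₀ ih =>
      intro hsub
      have hd₀D : d₀ ∈ D := hsub (Finset.mem_insert_self d₀ E)
      obtain ⟨z, hzM, hzN, hz3⟩ := ih ((Finset.subset_insert d₀ E).trans hsub)
      by_cases hcol : Col Pol.lines z (p (σ d₀))
      · refine ⟨z, hzM, hzN, fun d hd => ?_⟩
        rcases Finset.mem_insert.1 hd with rfl | hd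
        · exact hcol
        · exact hz3 d hd
      · have hpd₀M : p d₀ ∈ M := hNM (hpD_N d₀ hd₀D)
        have hzpd : Col Pol.lines z (p d₀) := hMsing.2 z hzM (p d₀) hpd₀M
        have hzne : z ≠ p d₀ := fun h => hzN (h ▸ hpD_N d₀ hd₀D)
        obtain ⟨L, hL, hzL, hdL⟩ := line_of_col hzpd hzne
        rcases Pol.one_or_all (p (σ d₀)) L hL with ⟨w, ⟨hwL, hwcol⟩, huniq⟩ | hall
        · have hLM : L ⊆ M := hMsing.1 z hzM (p d₀) hpd₀M hzne L hL hzL hdL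
          have hwpd : w ≠ p d₀ := by
            intro h
            rw [h] at hwcol
            exact (hσ (σ d₀) d₀).1 hwcol (hinv d₀).symm
          have hwN : w ∉ N := by
            intro hwN
            have hLN : L ⊆ N := (span_isSubspace Pol.lines _) w hwN (p d₀)
              (hpD_N d₀ hd₀D) hwpd L hL hwL hdL
            exact hzN (hLN hzL)
          refine ⟨w, hLM hwL, hwN, fun d hd => ?_⟩
          rcases Finset.mem_insert.1 hd with rfl | hd
          · exact col_symm hwcol
          · have hd₀d : d₀ ≠ d := fun h => hd₀ (h ▸ hd)
            have hz' : z ∈ {y | Col Pol.lines (p (σ d)) y} := col_symm (hz3 d hd)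
            have hpd' : p d₀ ∈ {y | Col Pol.lines (p (σ d)) y} := by
              refine (hσ (σ d) d₀).2 (fun h => ?_)
              rw [hinv] at h
              exact hd₀d h
            have hLperp : L ⊆ {y | Col Pol.lines (p (σ d)) y} :=
              (isSubspace_perp Pol (p (σ d))) z hz' (p d₀) hpd' hzne L hL hzL hdL
            exact col_symm (hLperp hwL)
        · exact absurd (col_symm (hall z hzL)) hcol
  obtain ⟨x, hxM, hxN, hx3⟩ := hcorr D subset_rfl
  have hxall : ∀ l, l ≠ i → l ≠ σ i → Col Pol.lines x (p l) := by
    intro l hl hlsi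
    rcases hcover l hl hlsi with h | h
    · exact hMsing.2 x hxM (p l) (hNM (hpD_N l h))
    · have := hx3 (σ l) h
      rwa [hinv] at this
  have hspan_singleton : ∀ j : Fin (2 * n),
      span Pol.lines (p '' ↑({j} : Finset (Fin (2 * n)))) = {p j} := by
    intro j
    rw [Finset.coe_singleton, Set.image_singleton, span_singleton]
  have hxi : ¬ Col Pol.lines x (p i) := by
    intro h
    have hmem : x ∈ span Pol.lines (p '' ↑({i} : Finset (Fin (2 * n)))) := by
      apply mem_span_of_perp Pol hσ hinv hn0 hsingi
      intro m hm
      rw [Finset.mem_singleton] at hm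
      by_cases hmi : m = i
      · exact hmi ▸ col_symm h
      · refine col_symm (hxall m hmi (fun h' => hm ?_))
        rw [h', hinv]
    rw [hspan_singleton i] at hmem
    exact hpiM (hmem ▸ hxM)
  have hxsi : ¬ Col Pol.lines x (p (σ i)) := by
    intro h
    have hsingsi : SingF σ {σ i} := by
      intro a ha hsa
      rw [Finset.mem_singleton] at ha hsa
      rw [ha] at hsa
      rw [hinv] at hsa
      exact sigma_ne Pol hσ i hsa.symm
    have hmem : x ∈ span Pol.lines (p '' ↑({σ i} : Finset (Fin (2 * n)))) := by
      apply mem_span_of_perp Pol hσ hinv hn0 hsingsi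
      intro m hm
      rw [Finset.mem_singleton] at hm
      by_cases hmsi : m = σ i
      · exact hmsi ▸ col_symm h
      · refine col_symm (hxall m (fun h' => hm ?_) hmsi)
        rw [h']
    rw [hspan_singleton (σ i)] at hmem
    exact hpsiM (hmem ▸ hxM)
  exact ⟨x, hxall, hxi, hxsi⟩

/-- Exactness: any base subset containing `𝓑(-i)` together with one element
through `p i` must coincide with `𝓑`. -/
lemma exact_of_plus (hn : 3 ≤ n) {k : ℕ} (hk : k ≤ n - 2)
    {p : Fin (2 * n) → P} (hp : IsBase Pol.lines p)
    {σ : Fin (2 * n) → Fin (2 * n)}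
    (hσ : ∀ a b, Col Pol.lines (p a) (p b) ↔ b ≠ σ a) (hinv : ∀ a, σ (σ a) = a)
    (i : Fin (2 * n)) {R' : Set (Set P)}
    (hR'B : R' ⊆ baseSubset Pol.lines p (k : ℤ))
    (hminus : minus (baseSubset Pol.lines p (k : ℤ)) (p i) ⊆ R')
    {S₀ : Set P} (hS₀ : S₀ ∈ R') (hpi : p i ∈ S₀)
    {q : Fin (2 * n) → P} (hq : IsBase Pol.lines q)
    (hRq : R' ⊆ baseSubset Pol.lines q (k : ℤ)) :
    baseSubset Pol.lines q (k : ℤ) = baseSubset Pol.lines p (k : ℤ) := by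
  classical
  have hn0 : n ≠ 0 := by omega
  have hkn : k + 2 ≤ n := by omega
  obtain ⟨τ, hτ, hτinv⟩ := exists_partner Pol hq
  -- Step 1: every p l with l ≠ i is in the range of q
  have hrec : ∀ l, l ≠ i → p l ∈ Set.range q := by
    intro l hl
    obtain ⟨X, hXs, hXcard, hXl, hXsl, hXi, hXsi⟩ :
        ∃ X : Finset (Fin (2 * n)), SingF σ X ∧ X.card = k ∧ l ∉ X ∧ σ l ∉ X ∧
          i ∉ X ∧ σ i ∉ X := by
      by_cases hcase : l = σ i
      · have hsing : SingF σ {l} := by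
          intro a ha hsa
          rw [Finset.mem_singleton] at ha hsa
          exact sigma_ne Pol hσ l (ha ▸ hsa)
        obtain ⟨K₁, hsub, hK₁s, hK₁c⟩ := singF_extend Pol hσ hinv hsing
          (by simp) (by omega : k + 1 ≤ n)
        have hlK₁ : l ∈ K₁ := hsub (Finset.mem_singleton_self l)
        refine ⟨K₁.erase l, singF_subset hK₁s (Finset.erase_subset l K₁), ?_,
          Finset.notMem_erase l K₁, ?_, ?_, ?_⟩
        · rw [Finset.card_erase_of_mem hlK₁, hK₁c]
          omega
        · exact fun h => hK₁s l hlK₁ (Finset.erase_subset l K₁ h)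
        · intro h
          have : i ∈ K₁ := Finset.erase_subset l K₁ h
          have : σ l ∈ K₁ := by rwa [hcase, hinv]
          exact hK₁s l hlK₁ this
        · exact fun h => (Finset.notMem_erase l K₁) (hcase ▸ h)
      · have hsing : SingF σ {l, i} := by
          intro a ha hsa
          rw [Finset.mem_insert, Finset.mem_singleton] at ha
          rcases ha with rfl | rfl
          · rw [Finset.mem_insert, Finset.mem_singleton] at hsa
            rcases hsa with h | h
            · exact sigma_ne Pol hσ a h
            · exact hcase (by rw [← h, hinv])
          · rw [Finset.mem_insert, Finset.mem_singleton] at hsa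
            rcases hsa with h | h
            · exact hcase h.symm
            · exact sigma_ne Pol hσ a h
        have hli : l ≠ i := hl
        have h2card : ({l, i} : Finset (Fin (2 * n))).card = 2 := by
          rw [Finset.card_insert_of_notMem (by simpa using hli), Finset.card_singleton]
        obtain ⟨K₁, hsub, hK₁s, hK₁c⟩ := singF_extend Pol hσ hinv hsing
          (by rw [h2card]; omega) (by omega : k + 2 ≤ n)
        have hlK₁ : l ∈ K₁ := hsub (Finset.mem_insert_self l _)
        have hiK₁ : i ∈ K₁ := hsub (by simp)
        refine ⟨K₁ \ {l, i}, singF_subset hK₁s (Finset.sdiff_subset), ?_, ?_, ?_, ?_, ?_⟩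
        · rw [Finset.card_sdiff_of_subset hsub, hK₁c, h2card]
          omega
        · simp
        · intro h
          exact hK₁s l hlK₁ ((Finset.mem_sdiff.1 h).1)
        · simp
        · intro h
          exact hK₁s i hiK₁ ((Finset.mem_sdiff.1 h).1)
    set I₁ : Finset (Fin (2 * n)) := insert l X with hI₁def
    set I₂ : Finset (Fin (2 * n)) := insert l (X.image σ) with hI₂def
    have hI₁s : SingF σ I₁ := by
      intro a ha hsa
      rcases Finset.mem_insert.1 ha with rfl | ha
      · rcases Finset.mem_insert.1 hsa with h | h
        · exact sigma_ne Pol hσ a h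
        · exact hXsl h
      · rcases Finset.mem_insert.1 hsa with h | h
        · exact hXsl (by rw [← h, hinv]; exact ha)
        · exact hXs a ha h
    have hI₂s : SingF σ I₂ := by
      intro a ha hsa
      rcases Finset.mem_insert.1 ha with rfl | ha
      · rcases Finset.mem_insert.1 hsa with h | h
        · exact sigma_ne Pol hσ a h
        · obtain ⟨b, hb, hba⟩ := Finset.mem_image.1 h
          exact hXl ((sigma_inj hinv hba) ▸ hb)
      · obtain ⟨b, hb, rfl⟩ := Finset.mem_image.1 ha
        rcases Finset.mem_insert.1 hsa with h | h
        · rw [hinv] at h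
          exact hXl (h ▸ hb)
        · rw [hinv] at h
          obtain ⟨c, hc, hcb⟩ := Finset.mem_image.1 h
          exact hXs c hc (hcb ▸ hb)
    have hlimg : l ∉ X.image σ := by
      intro h
      obtain ⟨b, hb, hbl⟩ := Finset.mem_image.1 h
      exact hXsl (by rw [← hbl, hinv]; exact hb)
    have hI₁c : I₁.card = k + 1 := by
      rw [hI₁def, Finset.card_insert_of_notMem hXl, hXcard]
    have hI₂c : I₂.card = k + 1 := by
      rw [hI₂def, Finset.card_insert_of_notMem hlimg,
        Finset.card_image_of_injective X (sigma_inj hinv), hXcard]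
    have hiI₁ : i ∉ I₁ := by
      rw [hI₁def, Finset.mem_insert]
      push_neg
      exact ⟨fun h => hl h.symm, hXi⟩
    have hiI₂ : i ∉ I₂ := by
      rw [hI₂def, Finset.mem_insert]
      push_neg
      refine ⟨fun h => hl h.symm, fun h => ?_⟩
      obtain ⟨b, hb, hbi⟩ := Finset.mem_image.1 h
      exact hXsi (by rw [← hbi, hinv]; exact hb)
    have hI₁₂ : I₁ ∩ I₂ = {l} := by
      apply Finset.Subset.antisymm
      · intro a ha
        rw [Finset.mem_inter] at ha
        rcases Finset.mem_insert.1 ha.1 with rfl | h1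
        · exact Finset.mem_singleton_self a
        · rcases Finset.mem_insert.1 ha.2 with rfl | h2
          · exact Finset.mem_singleton_self a
          · obtain ⟨b, hb, rfl⟩ := Finset.mem_image.1 h2
            exact absurd h1 (fun hh => hXs b hb hh)
      · intro a ha
        rw [Finset.mem_singleton] at ha
        subst ha
        exact Finset.mem_inter.2 ⟨Finset.mem_insert_self _ _, Finset.mem_insert_self _ _⟩
    set S₁ : Set P := span Pol.lines (p '' ↑I₁) with hS₁def
    set S₂ : Set P := span Pol.lines (p '' ↑I₂) with hS₂def
    have hS₁B : S₁ ∈ baseSubset Pol.lines p (k : ℤ) :=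
      span_mem_baseSubset Pol hσ hinv hn0 hI₁s hI₁c
    have hS₂B : S₂ ∈ baseSubset Pol.lines p (k : ℤ) :=
      span_mem_baseSubset Pol hσ hinv hn0 hI₂s hI₂c
    have hS₁R : S₁ ∈ R' := hminus ⟨hS₁B, sep1 Pol hσ hinv (by exact_mod_cast hiI₁)⟩
    have hS₂R : S₂ ∈ R' := hminus ⟨hS₂B, sep1 Pol hσ hinv (by exact_mod_cast hiI₂)⟩
    obtain ⟨J₁, hJ₁s, hJ₁eq⟩ := baseSubset_unpack Pol hτ (hRq hS₁R)
    obtain ⟨J₂, hJ₂s, hJ₂eq⟩ := baseSubset_unpack Pol hτ (hRq hS₂R)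
    have hpint : S₁ ∩ S₂ = {p l} := by
      rw [hS₁def, hS₂def, span_inter Pol hσ hinv hn0 hI₁s hI₂s, hI₁₂,
        Finset.coe_singleton, Set.image_singleton, span_singleton]
    have hqint : S₁ ∩ S₂ = span Pol.lines (q '' ↑(J₁ ∩ J₂)) := by
      rw [hJ₁eq, hJ₂eq, span_inter Pol hτ hτinv hn0 hJ₁s hJ₂s]
    rcases (J₁ ∩ J₂).eq_empty_or_nonempty with hemp | ⟨j, hj⟩
    · rw [hemp] at hqint
      simp only [Finset.coe_empty, Set.image_empty, span_empty] at hqint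
      rw [hpint] at hqint
      exact absurd hqint (Set.singleton_ne_empty (p l))
    · have : q j ∈ S₁ ∩ S₂ := hqint ▸ subset_span _ _ ⟨j, by exact_mod_cast hj, rfl⟩
      rw [hpint] at this
      exact ⟨j, this⟩
  -- Step 2: range bookkeeping
  have hrp : (Set.range p).ncard = 2 * n := by
    rw [← Set.image_univ, Set.ncard_image_of_injOn hp.1.injOn, Set.ncard_univ,
      Nat.card_eq_fintype_card, Fintype.card_fin]
  have hrq : (Set.range q).ncard = 2 * n := by
    rw [← Set.image_univ, Set.ncard_image_of_injOn hq.1.injOn, Set.ncard_univ,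
      Nat.card_eq_fintype_card, Fintype.card_fin]
  set Aold : Set P := Set.range p \ {p i} with hAdef
  have hAsub : Aold ⊆ Set.range q := by
    rintro z ⟨⟨l, rfl⟩, hz⟩
    refine hrec l (fun h => hz ?_)
    rw [h]
    rfl
  have hAfin : Aold.Finite := (Set.finite_range p).subset Set.diff_subset
  have hAcard : Aold.ncard = 2 * n - 1 := by
    rw [hAdef, Set.ncard_diff_singleton_of_mem (Set.mem_range_self i),
      hrp]
  obtain ⟨y, hyq, hyA⟩ : ∃ y, y ∈ Set.range q ∧ y ∉ Aold := by
    by_contra hcon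
    push_neg at hcon
    have : (Set.range q).ncard ≤ Aold.ncard := Set.ncard_le_ncard hcon hAfin
    omega
  have hins : insert y Aold = Set.range q := by
    apply Set.eq_of_subset_of_ncard_le (Set.insert_subset hyq hAsub)
    rw [Set.ncard_insert_of_notMem hyA hAfin, hAcard, hrq]
    omega
  -- Step 3: properties of y
  have hpsiA : p (σ i) ∈ Aold := by
    refine ⟨Set.mem_range_self _, fun h => ?_⟩
    exact sigma_ne Pol hσ i (hp.1 h)
  obtain ⟨m₀, hm₀⟩ := hAsub hpsiA
  obtain ⟨j₁, hj₁, hj₁u⟩ := hq.2 m₀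
  have hmemA : ∀ z ∈ Aold, ∃ m, m ≠ i ∧ p m = z := by
    rintro z ⟨⟨m, rfl⟩, hz⟩
    exact ⟨m, fun h => hz (by rw [h]; rfl), rfl⟩
  have hqj₁y : q j₁ = y := by
    have : q j₁ ∈ insert y Aold := hins ▸ Set.mem_range_self j₁
    rcases this with h | h
    · exact h
    · obtain ⟨m, hm, hpm⟩ := hmemA _ h
      exfalso
      apply hj₁
      rw [hm₀, ← hpm]
      exact (hσ (σ i) m).2 (fun hh => hm (by rw [hh, hinv]))
  have hyn : ¬ Col Pol.lines (p (σ i)) y := by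
    rw [← hm₀, ← hqj₁y]
    exact hj₁
  obtain ⟨jy, hjy⟩ := hyq
  have hycol : ∀ m, m ≠ i → m ≠ σ i → Col Pol.lines y (p m) := by
    intro m hmi hmsi
    by_contra hcon
    have hpmA : p m ∈ Aold := ⟨Set.mem_range_self _, fun h => hmi (hp.1 h)⟩
    obtain ⟨j', hj'⟩ := hAsub hpmA
    obtain ⟨j'', hj'', hj''u⟩ := hq.2 jy
    have e1 : j' = j'' := hj''u j'
      (show ¬ Col Pol.lines (q jy) (q j') by rw [hjy, hj']; exact hcon)
    have e2 : m₀ = j'' := hj''u m₀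
      (show ¬ Col Pol.lines (q jy) (q m₀) by
        rw [hjy, hm₀]; exact fun h => hyn (col_symm h))
    have : p m = p (σ i) := by rw [← hj', ← hm₀, e1, e2]
    exact hmsi (hp.1 this)
  -- Step 4: identify y with p i
  obtain ⟨J₀, hJ₀s, hJ₀eq⟩ := baseSubset_unpack Pol hτ (hRq hS₀)
  by_cases hyJ : y ∈ q '' ↑J₀
  · have hyS₀ : y ∈ S₀ := hJ₀eq ▸ subset_span _ _ hyJ
    have hS₀sing : IsSingular Pol.lines S₀ := (hR'B hS₀).1.1
    have hcolyi : Col Pol.lines y (p i) := hS₀sing.2 y hyS₀ (p i) hpi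
    have hsingi : SingF σ {i} := by
      intro a ha hsa
      rw [Finset.mem_singleton] at ha hsa
      exact sigma_ne Pol hσ i (ha ▸ hsa)
    have hymem : y ∈ span Pol.lines (p '' ↑({i} : Finset (Fin (2 * n)))) := by
      apply mem_span_of_perp Pol hσ hinv hn0 hsingi
      intro m hm
      rw [Finset.mem_singleton] at hm
      by_cases hmi : m = i
      · exact hmi ▸ col_symm hcolyi
      · refine col_symm (hycol m hmi (fun h' => hm ?_))
        rw [h', hinv]
    rw [Finset.coe_singleton, Set.image_singleton, span_singleton] at hymem
    have hrange : Set.range q = Set.range p := by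
      rw [← hins, hymem, hAdef, Set.insert_diff_singleton,
        Set.insert_eq_of_mem (Set.mem_range_self i)]
    exact baseSubset_eq_of_range Pol hrange (k : ℤ)
  · exfalso
    have hsub' : q '' ↑J₀ ⊆ Aold := by
      intro z hz
      have hzq : z ∈ insert y Aold := by
        rw [hins]
        obtain ⟨j, _, rfl⟩ := hz
        exact Set.mem_range_self j
      rcases hzq with rfl | h
      · exact absurd hz hyJ
      · exact h
    set I : Set (Fin (2 * n)) := {l | p l ∈ q '' ↑J₀} with hIdef
    have himg : p '' I = q '' ↑J₀ := by
      apply subset_antisymm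
      · rintro z ⟨l, hl, rfl⟩
        exact hl
      · intro z hz
        obtain ⟨m, _, hpm⟩ := hmemA z (hsub' hz)
        exact ⟨m, by rw [hIdef, mem_setOf_eq, hpm]; exact hz, hpm⟩
    have hiI : i ∉ I := by
      intro h
      exact (hsub' h).2 rfl
    have hpimem : p i ∈ span Pol.lines (p '' I) := by
      rw [himg, ← hJ₀eq]
      exact hpi
    exact sep1 Pol hσ hinv hiI hpimem

end PolarGeoAux

open PolarGeo
/-- Proposition 3 (type C, `k ≤ n-2`): `𝓑(-i)` is a maximal inexact subset. -/
theorem minus_maximal_inexact_typeC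
    {P : Type*} {n : ℕ} (Pol : PolarSpace P n) (hn : 3 ≤ n)
    (hC : TypeC Pol.lines n) (k : ℕ) (hk : k ≤ n - 2)
    (p : Fin (2 * n) → P) (hp : IsBase Pol.lines p) (i : Fin (2 * n)) :
    IsMaxInexact Pol.lines n (k : ℤ) (baseSubset Pol.lines p (k : ℤ))
      (minus (baseSubset Pol.lines p (k : ℤ)) (p i)) := by
  classical
  have hn0 : n ≠ 0 := by omega
  obtain ⟨σ, hσ, hinv⟩ := PolarGeoAux.exists_partner Pol hp
  obtain ⟨x, hxall, hxi, hxsi⟩ := PolarGeoAux.exists_good_point Pol hn hC hσ hinv i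
  set p' : Fin (2 * n) → P := Function.update p i x with hp'def
  have hp'i : p' i = x := Function.update_self i x p
  have hp'val : ∀ l, l ≠ i → p' l = p l := fun l hl => Function.update_of_ne hl x p
  have hxnotp : ∀ l, x ≠ p l := by
    intro l h
    by_cases hli : l = i
    · refine hxi ?_
      rw [h, hli]
      exact PolarGeoAux.col_refl _ _
    · by_cases hlsi : l = σ i
      · refine hxsi ?_
        rw [h, hlsi]
        exact PolarGeoAux.col_refl _ _
      · refine hxi ?_
        rw [h]
        exact (hσ l i).2 (fun hh => hlsi (by rw [hh, hinv]))
  have hσ' : ∀ a b, Col Pol.lines (p' a) (p' b) ↔ b ≠ σ a := by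
    intro a b
    by_cases ha : a = i
    · rw [ha, hp'i]
      by_cases hb : b = i
      · rw [hb, hp'i]
        exact iff_of_true (PolarGeoAux.col_refl _ _)
          (fun h => PolarGeoAux.sigma_ne Pol hσ i h.symm)
      · rw [hp'val b hb]
        by_cases hbsi : b = σ i
        · rw [hbsi]
          exact iff_of_false hxsi (by simp)
        · exact iff_of_true (hxall b hb hbsi) hbsi
    · rw [hp'val a ha]
      by_cases hb : b = i
      · rw [hb, hp'i]
        by_cases hasi : a = σ i
        · rw [hasi, hinv]
          exact iff_of_false (fun h => hxsi (PolarGeoAux.col_symm h)) (by simp)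
        · refine iff_of_true (PolarGeoAux.col_symm (hxall a ha hasi)) ?_
          intro h
          exact hasi (by rw [h, hinv])
      · rw [hp'val b hb]
        exact hσ a b
  have hinj' : Function.Injective p' := by
    intro a b h
    by_cases ha : a = i
    · by_cases hb : b = i
      · rw [ha, hb]
      · rw [ha, hp'i, hp'val b hb] at h
        exact absurd h (hxnotp b)
    · by_cases hb : b = i
      · rw [hb, hp'i, hp'val a ha] at h
        exact absurd h.symm (hxnotp a)
      · rw [hp'val a ha, hp'val b hb] at h
        exact hp.1 h
  have hbase' : IsBase Pol.lines p' := by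
    refine ⟨hinj', fun a => ⟨σ a, ?_, fun j hj => ?_⟩⟩
    · exact fun h => (hσ' a (σ a)).1 h rfl
    · by_contra hne
      exact hj ((hσ' a j).2 hne)
  have hminus_sub : minus (baseSubset Pol.lines p (k : ℤ)) (p i) ⊆
      baseSubset Pol.lines p' (k : ℤ) := by
    rintro S ⟨⟨hdim, I, rfl⟩, hpiS⟩
    have hiI : i ∉ I := fun h => hpiS (PolarGeoAux.subset_span _ _ ⟨i, h, rfl⟩)
    refine ⟨hdim, I, ?_⟩
    have himg : p '' I = p' '' I :=
      Set.image_congr (fun l hl => (hp'val l (fun h => hiI (h ▸ hl))).symm)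
    rw [himg]
  have hsingi : PolarGeoAux.SingF σ {i} := fun a ha hsa => by
    rw [Finset.mem_singleton] at ha hsa
    exact PolarGeoAux.sigma_ne Pol hσ i (ha ▸ hsa)
  obtain ⟨K₁, hsubK₁, hK₁s, hK₁c⟩ := PolarGeoAux.singF_extend Pol hσ hinv hsingi
    (by simp) (by omega : k + 1 ≤ n)
  have hiK₁ : i ∈ K₁ := hsubK₁ (Finset.mem_singleton_self i)
  set S' : Set P := span Pol.lines (p' '' ↑K₁) with hS'def
  have hS'B' : S' ∈ baseSubset Pol.lines p' (k : ℤ) :=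
    PolarGeoAux.span_mem_baseSubset Pol hσ' hinv hn0 hK₁s hK₁c
  have hxS' : x ∈ S' := PolarGeoAux.subset_span _ _ ⟨i, by exact_mod_cast hiK₁, hp'i⟩
  have hS'not : S' ∉ baseSubset Pol.lines p (k : ℤ) := by
    intro hS'
    obtain ⟨J, hJs, hJeq⟩ := PolarGeoAux.baseSubset_unpack Pol hσ hS'
    have hS'sing : IsSingular Pol.lines S' := hS'.1.1
    by_cases hiJ : i ∈ J
    · have hpiS' : p i ∈ S' := by
        rw [hJeq]
        exact PolarGeoAux.subset_span _ _ ⟨i, by exact_mod_cast hiJ, rfl⟩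
      exact hxi (hS'sing.2 x hxS' (p i) hpiS')
    · by_cases hsiJ : σ i ∈ J
      · have hpsiS' : p (σ i) ∈ S' := by
          rw [hJeq]
          exact PolarGeoAux.subset_span _ _ ⟨σ i, by exact_mod_cast hsiJ, rfl⟩
        exact hxsi (hS'sing.2 x hxS' (p (σ i)) hpsiS')
      · have hsubperp : S' ⊆ {y | Col Pol.lines (p i) y} := by
          rw [hJeq]
          apply PolarGeoAux.span_subset_of (PolarGeoAux.isSubspace_perp Pol (p i))
          rintro z ⟨a, haJ, rfl⟩
          refine (hσ i a).2 (fun h => hsiJ ?_)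
          rw [← h]
          exact_mod_cast haJ
        exact hxi (PolarGeoAux.col_symm (hsubperp hxS'))
  have hne' : baseSubset Pol.lines p' (k : ℤ) ≠ baseSubset Pol.lines p (k : ℤ) := by
    intro h
    exact hS'not (h ▸ hS'B')
  constructor
  · exact ⟨fun S hS => hS.1, p', hbase', hminus_sub, hne'⟩
  · rintro R' ⟨hR'B, q, hq, hRq, hneq⟩ hsub
    refine hsub.antisymm (fun S hS => ⟨hR'B hS, fun hpiS => ?_⟩)
    exact hneq (PolarGeoAux.exact_of_plus Pol hn hk hp hσ hinv i hR'B hsub hS hpiS hq hRq)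
end

section
/- Let Π be a polar space of rank n ≥ 3 of type D, let 0 ≤ k ≤ n−2, let B = {p_1, …, p_{2n}} be a base of Π and 𝓑 the associated base subset of G_k. For every i ∈ {1, …, 2n}, the subset 𝓑(−i) is exact. -/
namespace PolarGeo

open Finset in
theorem _root_.PolarGeo.trivialmark : True := trivial

variable {P : Type*}

theorem col_refl (lines : Set (Set P)) (x : P) : Col lines x x := Or.inl rfl

theorem col_symm {lines : Set (Set P)} {x y : P} (h : Col lines x y) : Col lines y x := by
  rcases h with rfl | ⟨L, hL, h1, h2⟩
  · exact Or.inl rfl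
  · exact Or.inr ⟨L, hL, h2, h1⟩

theorem isSubspace_sInter {lines : Set (Set P)} {F : Set (Set P)}
    (h : ∀ S ∈ F, IsSubspace lines S) : IsSubspace lines (⋂₀ F) := by
  intro a ha b hb hab L hL haL hbL x hx
  intro S hS
  exact h S hS a (ha S hS) b (hb S hS) hab L hL haL hbL hx

theorem subset_span {lines : Set (Set P)} {X : Set P} : X ⊆ span lines X := by
  intro x hx S hS; exact hS.2 hx

theorem span_isSubspace {lines : Set (Set P)} {X : Set P} :
    IsSubspace lines (span lines X) :=
  isSubspace_sInter (fun _ hS => hS.1)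

theorem span_le {lines : Set (Set P)} {X S : Set P} (hS : IsSubspace lines S)
    (h : X ⊆ S) : span lines X ⊆ S := fun _ hx => hx S ⟨hS, h⟩

theorem span_mono {lines : Set (Set P)} {X Y : Set P} (h : X ⊆ Y) :
    span lines X ⊆ span lines Y := span_le span_isSubspace (h.trans subset_span)

theorem isSubspace_of_subsingleton {lines : Set (Set P)} {S : Set P}
    (h : S.Subsingleton) : IsSubspace lines S :=
  fun a ha b hb hab => absurd (h ha hb) hab

theorem span_empty {lines : Set (Set P)} : span lines (∅ : Set P) = ∅ :=
  subset_antisymm (span_le (isSubspace_of_subsingleton Set.subsingleton_empty) (by simp))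
    subset_span

theorem span_singleton {lines : Set (Set P)} (x : P) : span lines {x} = {x} :=
  subset_antisymm
    (span_le (isSubspace_of_subsingleton Set.subsingleton_singleton) subset_rfl) subset_span

variable {n : ℕ}

section WithPol

variable (Pol : PolarSpace P n)

theorem isSubspace_perp (X : Set P) : IsSubspace Pol.lines (perp Pol.lines X) := by
  intro a ha b hb hab L hL haL hbL z hz x hx
  rcases Pol.one_or_all x L hL with ⟨u, _, huniq⟩ | hall
  · exact absurd ((huniq a ⟨haL, ha x hx⟩).trans (huniq b ⟨hbL, hb x hx⟩).symm) hab
  · exact hall z hz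

theorem col_of_mem_span {X : Set P} {z y : P} (h : ∀ x ∈ X, Col Pol.lines z x)
    (hy : y ∈ span Pol.lines X) : Col Pol.lines z y :=
  span_le (isSubspace_perp Pol {z})
    (fun x hx w hw => by rcases hw with rfl; exact h x hx) hy z rfl

theorem isSingular_span {X : Set P} (h : ∀ x ∈ X, ∀ y ∈ X, Col Pol.lines x y) :
    IsSingular Pol.lines (span Pol.lines X) := by
  refine ⟨span_isSubspace, ?_⟩
  have h1 : ∀ x ∈ X, ∀ u ∈ span Pol.lines X, Col Pol.lines x u :=
    fun x hx _ hu => col_of_mem_span Pol (fun y hy => h x hx y hy) hu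
  intro u hu v hv
  exact col_of_mem_span Pol (fun x hx => col_symm (h1 x hx u hu)) hv

theorem isFlag_sUnion {lines : Set (Set P)} {c : Set (Set (Set P))}
    (hc : IsChain (· ⊆ ·) c) (h : ∀ C ∈ c, IsFlag lines C) : IsFlag lines (⋃₀ c) := by
  constructor
  · intro T hT T' hT' hne
    obtain ⟨C, hC, hTC⟩ := hT; obtain ⟨C', hC', hT'C⟩ := hT'
    rcases eq_or_ne C C' with rfl | hCC
    · exact (h C hC).1 hTC hT'C hne
    · rcases hc hC hC' hCC with h1 | h1
      · exact (h C' hC').1 (h1 hTC) hT'C hne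
      · exact (h C hC).1 hTC (h1 hT'C) hne
  · rintro T ⟨C, hC, hTC⟩; exact (h C hC).2 T hTC

theorem exists_maximal_flag {lines : Set (Set P)} {C₀ : Set (Set P)} (h : IsFlag lines C₀) :
    ∃ F, C₀ ⊆ F ∧ IsFlag lines F ∧ ∀ C', IsFlag lines C' → F ⊆ C' → F = C' := by
  obtain ⟨F, hsub, hmax⟩ := zorn_subset_nonempty {C | IsFlag lines C}
    (fun c hc hchain _ => ⟨⋃₀ c, isFlag_sUnion hchain (fun C hC => hc hC),
      fun s hs => Set.subset_sUnion_of_mem hs⟩) C₀ h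
  exact ⟨F, hsub, hmax.1, fun C' h1 h2 => subset_antisymm h2 (hmax.2 h1 h2)⟩

theorem exists_maximal_flagIn {lines : Set (Set P)} {S : Set P} {C₀ : Set (Set P)}
    (h : IsFlagIn lines S C₀) :
    ∃ F, C₀ ⊆ F ∧ IsFlagIn lines S F ∧ ∀ C', IsFlagIn lines S C' → F ⊆ C' → F = C' := by
  obtain ⟨F, hsub, hmax⟩ := zorn_subset_nonempty {C | IsFlagIn lines S C}
    (fun c hc hchain _ => ⟨⋃₀ c, ⟨isFlag_sUnion hchain (fun C hC => (hc hC).1),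
      by rintro T ⟨C, hC, hTC⟩; exact (hc hC).2 T hTC⟩,
      fun s hs => Set.subset_sUnion_of_mem hs⟩) C₀ h
  exact ⟨F, hsub, hmax.1, fun C' h1 h2 => subset_antisymm h2 (hmax.2 h1 h2)⟩

theorem flag_bound (hn0 : n ≠ 0) {C : Set (Set P)} (hC : IsFlag Pol.lines C) :
    C.Finite ∧ C.ncard ≤ n := by
  obtain ⟨F, hsub, hF, hmax⟩ := exists_maximal_flag hC
  have hcard := Pol.flag_card F hF hmax
  have hFfin : F.Finite := Set.finite_of_ncard_ne_zero (by rw [hcard]; exact hn0)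
  exact ⟨hFfin.subset hsub, hcard ▸ Set.ncard_le_ncard hsub hFfin⟩

end WithPol

/-- index sets containing no pair of `σ`-partners -/
def Good (σ : Fin (2 * n) → Fin (2 * n)) (J : Finset (Fin (2 * n))) : Prop :=
  ∀ a ∈ J, σ a ∉ J

theorem Good.subset {σ : Fin (2 * n) → Fin (2 * n)} {J J' : Finset (Fin (2 * n))}
    (h : J' ⊆ J) (hJ : Good σ J) : Good σ J' :=
  fun a ha hb => hJ a (h ha) (h hb)

section Sigma

variable {σ : Fin (2 * n) → Fin (2 * n)} (hinv : ∀ a, σ (σ a) = a) (hne : ∀ a, σ a ≠ a)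

include hinv in
theorem sigma_inj : Function.Injective σ :=
  Function.LeftInverse.injective hinv

include hinv in
theorem good_image {D : Finset (Fin (2 * n))} (hD : Good σ D) : Good σ (D.image σ) := by
  intro a ha hsa
  obtain ⟨d, hd, rfl⟩ := Finset.mem_image.1 ha
  obtain ⟨e, he, hee⟩ := Finset.mem_image.1 hsa
  rw [hinv d] at hee
  exact hD e he (hee ▸ hd)

include hinv hne in
theorem good_insert {J : Finset (Fin (2 * n))} {m : Fin (2 * n)} (hJ : Good σ J)
    (hm : σ m ∉ J) (hm2 : m ∉ J) : Good σ (insert m J) := by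
  intro a ha
  rcases Finset.mem_insert.1 ha with rfl | ha
  · intro hmem
    rcases Finset.mem_insert.1 hmem with h | h
    · exact hne a h
    · exact hm h
  · intro hmem
    rcases Finset.mem_insert.1 hmem with h | h
    · exact hm (by rw [← h, hinv]; exact ha)
    · exact hJ a ha h

include hinv in
theorem good_card {J : Finset (Fin (2 * n))} (hJ : Good σ J) : J.card ≤ n := by
  have hdisj : Disjoint J (J.image σ) := by
    rw [Finset.disjoint_left]
    intro a ha hmem
    obtain ⟨b, hb, rfl⟩ := Finset.mem_image.1 hmem
    exact hJ b hb ha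
  have h1 : (J ∪ J.image σ).card = J.card + J.card := by
    rw [Finset.card_union_of_disjoint hdisj, Finset.card_image_of_injective _ (sigma_inj hinv)]
  have h2 : (J ∪ J.image σ).card ≤ 2 * n := by
    simpa using Finset.card_le_card (Finset.subset_univ (J ∪ J.image σ))
  omega

include hinv hne in
theorem good_extend {B : Finset (Fin (2 * n))} {s : ℕ}
    (hB : 2 * s + (B ∪ B.image σ).card ≤ 2 * n + 1) :
    ∀ (d : ℕ) (A : Finset (Fin (2 * n))), Good σ A → Disjoint A B → A.card + d = s →
      ∃ A', A ⊆ A' ∧ A'.card = s ∧ Good σ A' ∧ Disjoint A' B := by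
  intro d
  induction d with
  | zero => intro A hA hAB hcard; exact ⟨A, subset_rfl, by omega, hA, hAB⟩
  | succ d ih =>
    intro A hA hAB hcard
    set blocked := A ∪ A.image σ ∪ (B ∪ B.image σ) with hbl
    have hblcard : blocked.card < 2 * n := by
      have h1 : blocked.card ≤ (A ∪ A.image σ).card + (B ∪ B.image σ).card :=
        Finset.card_union_le _ _
      have h2 : (A ∪ A.image σ).card ≤ A.card + A.card := by
        have := Finset.card_union_le A (A.image σ)
        have himg : (A.image σ).card ≤ A.card := Finset.card_image_le
        omega
      omega
    have hex : ∃ m, m ∉ blocked := by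
      by_contra hcon
      push_neg at hcon
      have : blocked = Finset.univ := Finset.eq_univ_iff_forall.2 hcon
      rw [this] at hblcard
      simp at hblcard
    obtain ⟨m, hm⟩ := hex
    have hmA : m ∉ A := fun h => hm (by simp [hbl, h])
    have hmsA : ∀ a ∈ A, σ a ≠ m := by
      intro a ha h
      exact hm (by
        simp only [hbl, Finset.mem_union]
        exact Or.inl (Or.inr (Finset.mem_image.2 ⟨a, ha, h⟩)))
    have hmB : m ∉ B := fun h => hm (by simp [hbl, h])
    have hσmA : σ m ∉ A := fun h => hmsA (σ m) h (hinv m)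
    have hgood : Good σ (insert m A) := good_insert hinv hne hA hσmA hmA
    have hdisj : Disjoint (insert m A) B := by
      rw [Finset.disjoint_left]
      intro a ha hB2
      rcases Finset.mem_insert.1 ha with rfl | ha
      · exact hmB hB2
      · exact (Finset.disjoint_left.1 hAB) ha hB2
    obtain ⟨A', h1, h2, h3, h4⟩ := ih (insert m A) hgood hdisj
      (by rw [Finset.card_insert_of_notMem hmA]; omega)
    exact ⟨A', (Finset.subset_insert _ _).trans h1, h2, h3, h4⟩

end Sigma

theorem exists_chain_piece {α : Type*} [DecidableEq α] :
    ∀ (d : ℕ) (A B : Finset α), A ⊆ B → B.card = A.card + d →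
    ∃ f : ℕ → Finset α, f A.card = A ∧ f B.card = B ∧
      (∀ l, A.card ≤ l → l ≤ B.card → (f l).card = l ∧ f l ⊆ B ∧ A ⊆ f l) ∧
      (∀ l l', A.card ≤ l → l ≤ l' → l' ≤ B.card → f l ⊆ f l') := by
  intro d
  induction d with
  | zero =>
    intro A B hAB hcard
    have : A = B := Finset.eq_of_subset_of_card_le hAB (by omega)
    subst this
    refine ⟨fun _ => A, rfl, rfl, fun l h1 h2 => ?_, fun _ _ _ _ _ => subset_rfl⟩
    have : l = A.card := by omega
    subst this
    exact ⟨by simp, by simp, by simp⟩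
  | succ d ih =>
    intro A B hAB hcard
    have hne : (B \ A).Nonempty := by
      rw [Finset.sdiff_nonempty]
      intro h
      have := Finset.card_le_card h
      omega
    obtain ⟨b, hb⟩ := hne
    have hbB : b ∈ B := (Finset.mem_sdiff.1 hb).1
    have hbA : b ∉ A := (Finset.mem_sdiff.1 hb).2
    have hcards : (insert b A).card = A.card + 1 := Finset.card_insert_of_notMem hbA
    obtain ⟨f', hf1, hf2, hf3, hf4⟩ := ih (insert b A) B
      (Finset.insert_subset hbB hAB) (by omega)
    refine ⟨fun l => if l ≤ A.card then A else f' l, by simp, ?_, ?_, ?_⟩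
    · have : ¬ (B.card ≤ A.card) := by omega
      simp only [this, if_false]
      exact hf2
    · intro l h1 h2
      by_cases hl : l ≤ A.card
      · have : l = A.card := by omega
        subst this
        exact ⟨by simp, by simp [hAB], by simp⟩
      · simp only [if_neg hl]
        obtain ⟨c1, c2, c3⟩ := hf3 l (by omega) h2
        exact ⟨c1, c2, (Finset.subset_insert _ _).trans c3⟩
    · intro l l' h1 h2 h3
      by_cases hl : l ≤ A.card
      · by_cases hl' : l' ≤ A.card
        · simp [hl, hl']
        · simp only [if_pos hl, if_neg hl']
          exact (Finset.subset_insert _ _).trans (hf3 l' (by omega) h3).2.2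
      · have hl' : ¬ (l' ≤ A.card) := by omega
        simp only [if_neg hl, if_neg hl']
        exact hf4 l l' (by omega) h2 h3

theorem chain_glue {α : Type*} [DecidableEq α] {A B C : Finset α}
    (hAB : A ⊆ B) (hBC : B ⊆ C)
    (f₁ f₂ : ℕ → Finset α)
    (h1A : f₁ A.card = A) (h1B : f₁ B.card = B)
    (h1P : ∀ l, A.card ≤ l → l ≤ B.card → (f₁ l).card = l ∧ f₁ l ⊆ B ∧ A ⊆ f₁ l)
    (h1M : ∀ l l', A.card ≤ l → l ≤ l' → l' ≤ B.card → f₁ l ⊆ f₁ l')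
    (h2B : f₂ B.card = B) (h2C : f₂ C.card = C)
    (h2P : ∀ l, B.card ≤ l → l ≤ C.card → (f₂ l).card = l ∧ f₂ l ⊆ C ∧ B ⊆ f₂ l)
    (h2M : ∀ l l', B.card ≤ l → l ≤ l' → l' ≤ C.card → f₂ l ⊆ f₂ l') :
    ∃ f : ℕ → Finset α, f A.card = A ∧ f B.card = B ∧ f C.card = C ∧
      (∀ l, A.card ≤ l → l ≤ C.card → (f l).card = l ∧ f l ⊆ C ∧ A ⊆ f l) ∧
      (∀ l l', A.card ≤ l → l ≤ l' → l' ≤ C.card → f l ⊆ f l') ∧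
      (∀ l, l ≤ B.card → f l = f₁ l) := by
  have hab : A.card ≤ B.card := Finset.card_le_card hAB
  have hbc : B.card ≤ C.card := Finset.card_le_card hBC
  refine ⟨fun l => if l ≤ B.card then f₁ l else f₂ l, ?_, ?_, ?_, ?_, ?_, fun l hl => by simp [hl]⟩
  · simp only [if_pos hab, h1A]
  · simp only [if_pos le_rfl, h1B]
  · by_cases h : C.card ≤ B.card
    · have : B = C := Finset.eq_of_subset_of_card_le hBC h
      subst this
      simp only [if_pos le_rfl, h1B]
    · simp only [if_neg h, h2C]
  · intro l hl1 hl2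
    by_cases h : l ≤ B.card
    · obtain ⟨c1, c2, c3⟩ := h1P l hl1 h
      simp only [if_pos h]
      exact ⟨c1, c2.trans hBC, c3⟩
    · obtain ⟨c1, c2, c3⟩ := h2P l (by omega) hl2
      simp only [if_neg h]
      exact ⟨c1, c2, hAB.trans c3⟩
  · intro l l' h1 h2 h3
    by_cases hl : l ≤ B.card
    · by_cases hl' : l' ≤ B.card
      · simp only [if_pos hl, if_pos hl']
        exact h1M l l' h1 h2 hl'
      · simp only [if_pos hl, if_neg hl']
        exact ((h1P l h1 hl).2.1).trans (h2P l' (by omega) h3).2.2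
    · have hl' : ¬ (l' ≤ B.card) := by omega
      simp only [if_neg hl, if_neg hl']
      exact h2M l l' (by omega) h2 h3

end PolarGeo

namespace PolarGeo

variable {P : Type*} {n : ℕ}

/-- span of a finite set of base points -/
def spanJ (lines : Set (Set P)) (p : Fin (2 * n) → P)
    (J : Finset (Fin (2 * n))) : Set P :=
  span lines (p '' ↑J)

theorem mem_spanJ {lines : Set (Set P)} {p : Fin (2 * n) → P}
    {J : Finset (Fin (2 * n))} {a : Fin (2 * n)} (ha : a ∈ J) :
    p a ∈ spanJ lines p J :=
  subset_span ⟨a, by simpa using ha, rfl⟩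

theorem spanJ_mono {lines : Set (Set P)} {p : Fin (2 * n) → P}
    {J J' : Finset (Fin (2 * n))} (h : J ⊆ J') :
    spanJ lines p J ⊆ spanJ lines p J' :=
  span_mono (Set.image_mono (by exact_mod_cast h))

theorem spanJ_singleton {lines : Set (Set P)} {p : Fin (2 * n) → P} (a : Fin (2 * n)) :
    spanJ lines p {a} = {p a} := by
  unfold spanJ
  rw [Finset.coe_singleton, Set.image_singleton, span_singleton]

theorem spanJ_empty {lines : Set (Set P)} {p : Fin (2 * n) → P} :
    spanJ lines p (∅ : Finset (Fin (2 * n))) = ∅ := by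
  unfold spanJ
  rw [Finset.coe_empty, Set.image_empty, span_empty]

theorem spanJ_nonempty {lines : Set (Set P)} {p : Fin (2 * n) → P}
    {J : Finset (Fin (2 * n))} (h : J.Nonempty) : (spanJ lines p J).Nonempty := by
  obtain ⟨a, ha⟩ := h
  exact ⟨p a, mem_spanJ ha⟩

section BaseCtx

variable (Pol : PolarSpace P n) {p : Fin (2 * n) → P} {σ : Fin (2 * n) → Fin (2 * n)}
  (hσ : ∀ a b, ¬ Col Pol.lines (p a) (p b) ↔ b = σ a)

theorem exists_sigma {q : Fin (2 * n) → P} (hq : IsBase Pol.lines q) :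
    ∃ τ : Fin (2 * n) → Fin (2 * n), ∀ a b, ¬ Col Pol.lines (q a) (q b) ↔ b = τ a := by
  choose τ h1 h2 using hq.2
  exact ⟨τ, fun a b => ⟨fun h => h2 a b h, fun h => h ▸ h1 a⟩⟩

include hσ

theorem col_base_iff {a b : Fin (2 * n)} :
    Col Pol.lines (p a) (p b) ↔ b ≠ σ a := by
  constructor
  · intro h hb
    exact (hσ a b).2 hb h
  · intro h
    by_contra h2
    exact h ((hσ a b).1 h2)

theorem sig_ne (a : Fin (2 * n)) : σ a ≠ a := by
  intro h
  exact (hσ a a).2 h.symm (col_refl _ _)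

theorem sig_invol (a : Fin (2 * n)) : σ (σ a) = a := by
  have h1 : ¬ Col Pol.lines (p a) (p (σ a)) := (hσ a (σ a)).2 rfl
  exact ((hσ (σ a) a).1 (fun h => h1 (col_symm h))).symm

theorem col_pt_spanJ {J : Finset (Fin (2 * n))} {t : Fin (2 * n)} (ht : σ t ∉ J)
    {y : P} (hy : y ∈ spanJ Pol.lines p J) : Col Pol.lines (p t) y := by
  refine col_of_mem_span Pol ?_ hy
  rintro x ⟨b, hb, rfl⟩
  refine (col_base_iff Pol hσ).2 (fun h => ht ?_)
  rw [← h]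
  exact_mod_cast hb

theorem not_mem_spanJ {J : Finset (Fin (2 * n))} {t : Fin (2 * n)} (ht : t ∉ J) :
    p t ∉ spanJ Pol.lines p J := by
  intro h
  have h2 : Col Pol.lines (p (σ t)) (p t) :=
    col_pt_spanJ Pol hσ (by rw [sig_invol Pol hσ]; exact ht) h
  exact (col_base_iff Pol hσ).1 h2 (sig_invol Pol hσ t).symm

theorem isSingular_spanJ {J : Finset (Fin (2 * n))} (hJ : Good σ J) :
    IsSingular Pol.lines (spanJ Pol.lines p J) := by
  refine isSingular_span Pol ?_
  rintro x ⟨a, ha, rfl⟩ y ⟨b, hb, rfl⟩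
  refine (col_base_iff Pol hσ).2 (fun h => ?_)
  exact hJ a (by exact_mod_cast ha) (by rw [← h]; exact_mod_cast hb)

theorem spanJ_ne {J J' : Finset (Fin (2 * n))} {m : Fin (2 * n)}
    (hm : m ∈ J') (hm2 : m ∉ J) : spanJ Pol.lines p J ≠ spanJ Pol.lines p J' := by
  intro h
  exact not_mem_spanJ Pol hσ hm2 (h ▸ mem_spanJ hm)

end BaseCtx

/-- chains of spans of base points -/
def towerSet (lines : Set (Set P)) (p : Fin (2 * n) → P)
    (f : ℕ → Finset (Fin (2 * n))) (a b : ℕ) : Set (Set P) :=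
  (fun l => spanJ lines p (f l)) '' Set.Icc a b

section Tower

variable (Pol : PolarSpace P n) {p : Fin (2 * n) → P} {σ : Fin (2 * n) → Fin (2 * n)}
  (hσ : ∀ a b, ¬ Col Pol.lines (p a) (p b) ↔ b = σ a)

include hσ

theorem tower_lemma {f : ℕ → Finset (Fin (2 * n))} {a b : ℕ}
    (ha : 1 ≤ a) (hab : a ≤ b)
    (hP : ∀ l, a ≤ l → l ≤ b → (f l).card = l)
    (hM : ∀ l l', a ≤ l → l ≤ l' → l' ≤ b → f l ⊆ f l')
    (hgood : Good σ (f b)) :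
    IsFlag Pol.lines (towerSet Pol.lines p f a b) ∧
    (towerSet Pol.lines p f a b).Finite ∧
    (towerSet Pol.lines p f a b).ncard = b + 1 - a ∧
    (∀ T ∈ towerSet Pol.lines p f a b, T ⊆ spanJ Pol.lines p (f b)) := by
  have hsub : ∀ l, a ≤ l → l ≤ b → f l ⊆ f b := fun l h1 h2 => hM l b h1 h2 le_rfl
  have hne2 : ∀ l l', a ≤ l → l < l' → l' ≤ b →
      spanJ Pol.lines p (f l) ≠ spanJ Pol.lines p (f l') := by
    intro l l' h1 h2 h3
    have hss : f l ⊆ f l' := hM l l' h1 (le_of_lt h2) h3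
    have hcards : (f l).card < (f l').card := by
      rw [hP l h1 (h2.le.trans h3), hP l' (h1.trans h2.le) h3]; exact h2
    obtain ⟨m, hm1, hm2⟩ := Finset.exists_of_ssubset ⟨hss, fun h => by
      have := Finset.card_le_card h; omega⟩
    exact spanJ_ne Pol hσ hm1 hm2
  have hmem : ∀ T ∈ towerSet Pol.lines p f a b, T ⊆ spanJ Pol.lines p (f b) := by
    rintro T ⟨l, hl, rfl⟩
    exact spanJ_mono (hsub l hl.1 hl.2)
  refine ⟨⟨?_, ?_⟩, ?_, ?_, hmem⟩
  · rintro T ⟨l, hl, rfl⟩ T' ⟨l', hl', rfl⟩ hTT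
    rcases le_total l l' with h | h
    · exact Or.inl (spanJ_mono (hM l l' hl.1 h hl'.2))
    · exact Or.inr (spanJ_mono (hM l' l hl'.1 h hl.2))
  · rintro T ⟨l, hl, rfl⟩
    refine ⟨isSingular_spanJ Pol hσ (Good.subset (hsub l hl.1 hl.2) hgood), ?_⟩
    refine spanJ_nonempty (Finset.card_pos.1 ?_)
    rw [hP l hl.1 hl.2]; exact le_trans ha hl.1
  · exact (Set.finite_Icc a b).image _
  · rw [towerSet, ← Finset.coe_Icc, Set.ncard_image_of_injOn, Set.ncard_coe_finset,
      Nat.card_Icc]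
    intro l hl l' hl' hee
    simp only [Finset.coe_Icc, Set.mem_Icc] at hl hl'
    by_contra hne3
    rcases lt_or_gt_of_ne hne3 with h | h
    · exact hne2 l l' hl.1 h hl'.2 hee
    · exact hne2 l' l hl'.1 h hl.2 hee.symm

end Tower

end PolarGeo

namespace PolarGeo

variable {P : Type*} {n : ℕ}

theorem exists_fullchain3 {J₀ J₁ K : Finset (Fin (2 * n))}
    (h01 : J₀ ⊆ J₁) (h1K : J₁ ⊆ K) :
    ∃ f : ℕ → Finset (Fin (2 * n)), f 0 = ∅ ∧ f J₀.card = J₀ ∧ f J₁.card = J₁ ∧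
      f K.card = K ∧
      (∀ l, l ≤ K.card → (f l).card = l ∧ f l ⊆ K) ∧
      (∀ l l', l ≤ l' → l' ≤ K.card → f l ⊆ f l') := by
  have hc01 : J₀.card ≤ J₁.card := Finset.card_le_card h01
  have hc1K : J₁.card ≤ K.card := Finset.card_le_card h1K
  obtain ⟨g1, a1, b1, c1, m1⟩ :=
    exists_chain_piece J₀.card ∅ J₀ (Finset.empty_subset _) (by simp)
  obtain ⟨g2, a2, b2, c2, m2⟩ :=
    exists_chain_piece (J₁.card - J₀.card) J₀ J₁ h01 (by omega)
  obtain ⟨g3, a3, b3, c3, p3, m3, e3⟩ :=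
    chain_glue (Finset.empty_subset J₀) h01 g1 g2 a1 b1 c1 m1 a2 b2 c2 m2
  obtain ⟨g4, a4, b4, c4, m4⟩ :=
    exists_chain_piece (K.card - J₁.card) J₁ K h1K (by omega)
  obtain ⟨f, hA, hB, hC, hP, hM, hE⟩ :=
    chain_glue (Finset.empty_subset J₁) h1K g3 g4 a3 c3 p3 m3 a4 b4 c4 m4
  have hcard0 : (∅ : Finset (Fin (2 * n))).card = 0 := Finset.card_empty
  refine ⟨f, by rw [← hcard0]; exact hA, ?_, hB, hC, ?_, ?_⟩
  · rw [hE J₀.card hc01, e3 J₀.card le_rfl, b1]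
  · intro l hl
    obtain ⟨c1', c2', _⟩ := hP l (by omega) hl
    exact ⟨c1', c2'⟩
  · intro l l' h1 h2
    exact hM l l' (by omega) h1 h2

section Counting

variable (Pol : PolarSpace P n) {p : Fin (2 * n) → P} {σ : Fin (2 * n) → Fin (2 * n)}
  (hσ : ∀ a b, ¬ Col Pol.lines (p a) (p b) ↔ b = σ a)

include hσ

theorem maxflagIn_ncard (hn0 : n ≠ 0) {J : Finset (Fin (2 * n))} (hJ : Good σ J)
    (hJne : J.Nonempty) {C : Set (Set P)}
    (hC : IsFlagIn Pol.lines (spanJ Pol.lines p J) C)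
    (hmax : ∀ C', IsFlagIn Pol.lines (spanJ Pol.lines p J) C' → C ⊆ C' → C = C') :
    C.Finite ∧ C.ncard = J.card := by
  have hinv := sig_invol Pol hσ
  have hnee := sig_ne Pol hσ
  have hJcard : J.card ≤ n := good_card hinv hJ
  set S := spanJ Pol.lines p J with hSdef
  -- a frame containing J
  obtain ⟨K, hJK, hKcard, hKgood, -⟩ :=
    good_extend hinv hnee (B := ∅) (s := n) (by simp) (n - J.card) J hJ (by simp) (by omega)
  obtain ⟨f, hf0, hfJ, hfJ', hfK, hfP, hfM⟩ := exists_fullchain3 (subset_refl J) hJK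
  rw [hKcard] at hfK hfP hfM
  -- S belongs to C
  have hSsing : IsSingular Pol.lines S := isSingular_spanJ Pol hσ hJ
  have hSne : S.Nonempty := spanJ_nonempty hJne
  have hSC : S ∈ C := by
    have h1 : IsFlagIn Pol.lines S (C ∪ {S}) := by
      refine ⟨⟨?_, ?_⟩, ?_⟩
      · rintro T (hT | hT) T' (hT' | hT') hne2
        · exact hC.1.1 hT hT' hne2
        · rcases hT' with rfl; exact Or.inl (hC.2 T hT)
        · rcases hT with rfl; exact Or.inr (hC.2 T' hT')
        · rcases hT; rcases hT'; exact absurd rfl hne2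
      · rintro T (hT | hT)
        · exact hC.1.2 T hT
        · rcases hT; exact ⟨hSsing, hSne⟩
      · rintro T (hT | hT)
        · exact hC.2 T hT
        · rcases hT; exact subset_rfl
    have h2 := hmax _ h1 Set.subset_union_left
    rw [h2]; exact Set.mem_union_right _ rfl
  -- extension to a maximal global flag
  obtain ⟨F, hCF, hF, hFmax⟩ := exists_maximal_flag hC.1
  have hFcard := Pol.flag_card F hF hFmax
  have hFfin : F.Finite := Set.finite_of_ncard_ne_zero (by rw [hFcard]; exact hn0)
  have hCfin : C.Finite := hFfin.subset hCF
  have hCeq : C = F ∩ {T | T ⊆ S} := by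
    refine hmax _ ⟨⟨IsChain.mono Set.inter_subset_left hF.1, fun T hT => hF.2 T hT.1⟩,
      fun T hT => hT.2⟩ (fun T hT => ⟨hCF hT, hC.2 T hT⟩)
  have hCle : C.ncard ≤ n := hFcard ▸ Set.ncard_le_ncard hCF hFfin
  -- the part of F above S
  have hFCnotsub : ∀ T ∈ F \ C, ¬ T ⊆ S := by
    rintro T ⟨hTF, hTC⟩ hTS
    exact hTC (hCeq ▸ ⟨hTF, hTS⟩)
  have habove : ∀ T ∈ F \ C, S ⊆ T := by
    rintro T hT
    have hTne : T ≠ S := fun h => hFCnotsub T hT (h ▸ subset_rfl)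
    rcases hF.1 (hCF hSC) hT.1 (Ne.symm hTne) with h | h
    · exact h
    · exact absurd h (hFCnotsub T hT)
  -- lower bound
  have hJpos : 1 ≤ J.card := Finset.card_pos.2 hJne
  obtain ⟨hTbflag, hTbfin, hTbcard, hTbsub⟩ :=
    tower_lemma Pol hσ (f := f) (a := 1) (b := J.card) le_rfl hJpos
      (fun l h1 h2 => (hfP l (by omega)).1)
      (fun l l' h1 h2 h3 => hfM l l' h2 (by omega))
      (by rw [hfJ]; exact hJ)
  set Tb := towerSet Pol.lines p f 1 J.card with hTbdef
  have hTbS : ∀ T ∈ Tb, T ⊆ S := by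
    intro T hT
    have := hTbsub T hT
    rwa [hfJ] at this
  have hflag2 : IsFlag Pol.lines (Tb ∪ (F \ C)) := by
    refine ⟨?_, ?_⟩
    · rintro T (hT | hT) T' (hT' | hT') hne2
      · exact hTbflag.1 hT hT' hne2
      · exact Or.inl ((hTbS T hT).trans (habove T' hT'))
      · exact Or.inr ((hTbS T' hT').trans (habove T hT))
      · exact hF.1 hT.1 hT'.1 hne2
    · rintro T (hT | hT)
      · exact hTbflag.2 T hT
      · exact hF.2 T hT.1
  have hdisj : Disjoint Tb (F \ C) := by
    rw [Set.disjoint_left]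
    intro T hT hT2
    exact hFCnotsub T hT2 (hTbS T hT)
  have hFCcard : (F \ C).ncard = n - C.ncard := by
    rw [Set.ncard_diff hCF hCfin, hFcard]
  have hunion := (flag_bound Pol hn0 hflag2).2
  rw [Set.ncard_union_eq hdisj hTbfin hFfin.diff, hTbcard, hFCcard] at hunion
  -- upper bound
  have hupper : C.ncard ≤ J.card := by
    rcases eq_or_lt_of_le hJcard with hcase | hcase
    · omega
    · obtain ⟨hTaflag, hTafin, hTacard, hTasub⟩ :=
        tower_lemma Pol hσ (f := f) (a := J.card + 1) (b := n) (by omega) (by omega)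
          (fun l h1 h2 => (hfP l h2).1)
          (fun l l' h1 h2 h3 => hfM l l' h2 h3)
          (by rw [hfK]; exact hKgood)
      set Ta := towerSet Pol.lines p f (J.card + 1) n with hTadef
      have hTanotsub : ∀ T ∈ Ta, ¬ T ⊆ S := by
        rintro T ⟨l, hl, rfl⟩ hsub2
        simp only [Set.mem_Icc] at hl
        have hJfl : J ⊆ f l := by
          have := hfM J.card l (by omega) hl.2
          rwa [hfJ] at this
        have hcards : J.card < (f l).card := by
          rw [(hfP l hl.2).1]; omega
        obtain ⟨m, hm1, hm2⟩ := Finset.exists_of_ssubset ⟨hJfl, fun h => by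
          have := Finset.card_le_card h; omega⟩
        exact not_mem_spanJ Pol hσ hm2 (hsub2 (mem_spanJ hm1))
      have hflag3 : IsFlag Pol.lines (C ∪ Ta) := by
        refine ⟨?_, ?_⟩
        · rintro T (hT | hT) T' (hT' | hT') hne2
          · exact hC.1.1 hT hT' hne2
          · rcases hT' with ⟨l, hl, rfl⟩
            simp only [Set.mem_Icc] at hl
            refine Or.inl ((hC.2 T hT).trans ?_)
            have := hfM J.card l (by omega) hl.2
            rw [hfJ] at this
            exact spanJ_mono this
          · rcases hT with ⟨l, hl, rfl⟩
            simp only [Set.mem_Icc] at hl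
            refine Or.inr ((hC.2 T' hT').trans ?_)
            have := hfM J.card l (by omega) hl.2
            rw [hfJ] at this
            exact spanJ_mono this
          · exact hTaflag.1 hT hT' hne2
        · rintro T (hT | hT)
          · exact hC.1.2 T hT
          · exact hTaflag.2 T hT
      have hdisj2 : Disjoint C Ta := by
        rw [Set.disjoint_left]
        intro T hT hT2
        exact hTanotsub T hT2 (hC.2 T hT)
      have hunion2 := (flag_bound Pol hn0 hflag3).2
      rw [Set.ncard_union_eq hdisj2 hCfin hTafin, hTacard] at hunion2
      omega
  exact ⟨hCfin, by omega⟩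

theorem hasDim_spanJ (hn0 : n ≠ 0) {J : Finset (Fin (2 * n))} (hJ : Good σ J)
    (hJne : J.Nonempty) :
    HasDim Pol.lines (spanJ Pol.lines p J) ((J.card : ℤ) - 1) := by
  have hSsing : IsSingular Pol.lines (spanJ Pol.lines p J) := isSingular_spanJ Pol hσ hJ
  have hSne := spanJ_nonempty (p := p) (lines := Pol.lines) hJne
  have h0 : IsFlagIn Pol.lines (spanJ Pol.lines p J) {spanJ Pol.lines p J} := by
    refine ⟨⟨?_, ?_⟩, ?_⟩
    · intro a ha b hb hne2
      rcases ha; rcases hb; exact absurd rfl hne2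
    · intro T hT; rcases hT; exact ⟨hSsing, hSne⟩
    · intro T hT; rcases hT; exact subset_rfl
  obtain ⟨C, hsub, hC, hCmax⟩ := exists_maximal_flagIn h0
  obtain ⟨hCfin, hCcard⟩ := maxflagIn_ncard Pol hσ hn0 hJ hJne hC hCmax
  exact ⟨hSsing, C, hC, hCmax, hCfin, by rw [hCcard]; push_cast; ring⟩

theorem frame_max (hn0 : n ≠ 0) {K : Finset (Fin (2 * n))} (hK : Good σ K)
    (hKcard : K.card = n) {T : Set P} (hT : IsSingular Pol.lines T)
    (hsub : spanJ Pol.lines p K ⊆ T) : T = spanJ Pol.lines p K := by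
  by_contra hne3
  obtain ⟨f, hf0, hfK1, hfK2, hfK, hfP, hfM⟩ := exists_fullchain3 (subset_refl K) (subset_refl K)
  rw [hKcard] at hfK hfP hfM
  obtain ⟨hTflag, hTfin, hTcard, hTsub⟩ :=
    tower_lemma Pol hσ (f := f) (a := 1) (b := n) le_rfl (by omega)
      (fun l h1 h2 => (hfP l h2).1)
      (fun l l' h1 h2 h3 => hfM l l' h2 h3)
      (by rw [hfK]; exact hK)
  set Tw := towerSet Pol.lines p f 1 n with hTw
  have hTwS : ∀ T' ∈ Tw, T' ⊆ spanJ Pol.lines p K := by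
    intro T' hT'
    have := hTsub T' hT'
    rwa [hfK] at this
  have hTnot : T ∉ Tw := by
    intro hmem
    exact hne3 (subset_antisymm (by
      have := hTwS T hmem
      exact this) hsub)
  have hflag : IsFlag Pol.lines (insert T Tw) := by
    refine ⟨?_, ?_⟩
    · rintro T1 (rfl | hT1) T2 (rfl | hT2) hne2
      · exact absurd rfl hne2
      · exact Or.inr ((hTwS T2 hT2).trans hsub)
      · exact Or.inl ((hTwS T1 hT1).trans hsub)
      · exact hTflag.1 hT1 hT2 hne2
    · rintro T1 (rfl | hT1)
      · refine ⟨hT, ?_⟩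
        obtain ⟨x, hx⟩ : (spanJ Pol.lines p K).Nonempty :=
          spanJ_nonempty (Finset.card_pos.1 (by omega))
        exact ⟨x, hsub hx⟩
      · exact hTflag.2 T1 hT1
  have hb := (flag_bound Pol hn0 hflag).2
  rw [Set.ncard_insert_of_notMem hTnot hTfin, hTcard] at hb
  omega

theorem mem_frame_span (hn0 : n ≠ 0) {K : Finset (Fin (2 * n))} (hK : Good σ K)
    (hKcard : K.card = n) {y : P} (hy : ∀ a ∈ K, Col Pol.lines (p a) y) :
    y ∈ spanJ Pol.lines p K := by
  set T := span Pol.lines (insert y (p '' ↑K)) with hT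
  have hTsing : IsSingular Pol.lines T := by
    refine isSingular_span Pol ?_
    rintro x (rfl | ⟨a, ha, rfl⟩) z (rfl | ⟨b, hb, rfl⟩)
    · exact col_refl _ _
    · exact col_symm (hy b (by exact_mod_cast hb))
    · exact hy a (by exact_mod_cast ha)
    · refine (col_base_iff Pol hσ).2 (fun h => ?_)
      exact hK a (by exact_mod_cast ha) (by rw [← h]; exact_mod_cast hb)
  have h1 : spanJ Pol.lines p K ⊆ T := span_mono (Set.subset_insert _ _)
  have h2 := frame_max Pol hσ hn0 hK hKcard hTsing h1
  have h3 : y ∈ T := subset_span (Set.mem_insert _ _)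
  rwa [h2] at h3

end Counting

end PolarGeo

namespace PolarGeo

variable {P : Type*} {n : ℕ}

section Swap

variable (Pol : PolarSpace P n) {p : Fin (2 * n) → P} {σ : Fin (2 * n) → Fin (2 * n)}
  (hσ : ∀ a b, ¬ Col Pol.lines (p a) (p b) ↔ b = σ a)

include hσ

theorem swap_lemma (hn0 : n ≠ 0) {J₀ : Finset (Fin (2 * n))} {m : Fin (2 * n)}
    (hJ₀ : Good σ J₀) (hm : m ∉ J₀) (hσm : σ m ∉ J₀) {x : P}
    (h1 : x ∈ spanJ Pol.lines p (insert m J₀))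
    (h2 : x ∈ spanJ Pol.lines p (insert (σ m) J₀)) :
    x ∈ spanJ Pol.lines p J₀ := by
  by_contra hx
  have hinv := sig_invol Pol hσ
  have hnee := sig_ne Pol hσ
  have hg1 : Good σ (insert m J₀) := good_insert hinv hnee hJ₀ hσm hm
  have hg2 : Good σ (insert (σ m) J₀) :=
    good_insert hinv hnee hJ₀ (by rw [hinv]; exact hm) hσm
  have key : ∀ m', m' ∉ J₀ → Good σ (insert m' J₀) →
      x ∈ spanJ Pol.lines p (insert m' J₀) →
      span Pol.lines (insert x (p '' ↑J₀)) = spanJ Pol.lines p (insert m' J₀) := by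
    intro m' hm' hg hxm
    set U := span Pol.lines (insert x (p '' ↑J₀)) with hU
    have hbig : insert x (p '' ↑J₀) ⊆ spanJ Pol.lines p (insert m' J₀) := by
      refine Set.insert_subset hxm ?_
      refine Set.Subset.trans ?_ (spanJ_mono (Finset.subset_insert m' J₀))
      exact subset_span
    have hUsub : U ⊆ spanJ Pol.lines p (insert m' J₀) :=
      span_le span_isSubspace hbig
    have hJsub : spanJ Pol.lines p J₀ ⊆ U := span_mono (Set.subset_insert _ _)
    have hUsing : IsSingular Pol.lines U := by
      refine isSingular_span Pol ?_
      intro u hu v hv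
      exact (isSingular_spanJ Pol hσ hg).2 u (hbig hu) v (hbig hv)
    have hxU : x ∈ U := subset_span (Set.mem_insert _ _)
    -- frame over `insert m' J₀`
    obtain ⟨K, hsubK, hKcard, hKgood, -⟩ :=
      good_extend hinv hnee (B := ∅) (s := n) (by simp) (n - (insert m' J₀).card)
        (insert m' J₀) hg (by simp) (by have := good_card hinv hg; omega)
    obtain ⟨f, hf0, hfJ0, hfJ1, hfK, hfP, hfM⟩ :=
      exists_fullchain3 (Finset.subset_insert m' J₀) hsubK
    rw [hKcard] at hfK hfP hfM
    have hcardins : (insert m' J₀).card = J₀.card + 1 := Finset.card_insert_of_notMem hm'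
    have hcardle : J₀.card + 1 ≤ n := by
      have := good_card hinv hg; omega
    obtain ⟨hTflag, hTfin, hTcard, hTsub⟩ :=
      tower_lemma Pol hσ (f := f) (a := 1) (b := n) le_rfl (by omega)
        (fun l _ h2' => (hfP l h2').1)
        (fun l l' _ h2' h3 => hfM l l' h2' h3)
        (by rw [hfK]; exact hKgood)
    set Tw := towerSet Pol.lines p f 1 n with hTw
    by_cases hUt : U ∈ Tw
    · obtain ⟨l, hl, hUl⟩ := hUt
      simp only [Set.mem_Icc] at hl
      rcases le_or_gt l J₀.card with hll | hll
      · exfalso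
        have hfl : f l ⊆ J₀ := by
          have := hfM l J₀.card hll (by omega)
          rwa [hfJ0] at this
        have : U ⊆ spanJ Pol.lines p J₀ := hUl ▸ spanJ_mono hfl
        exact hx (this hxU)
      · have hins : insert m' J₀ ⊆ f l := by
          have := hfM (insert m' J₀).card l (by omega) hl.2
          rwa [hfJ1] at this
        have hsub2 : spanJ Pol.lines p (insert m' J₀) ⊆ U := hUl ▸ spanJ_mono hins
        exact subset_antisymm hUsub hsub2
    · exfalso
      have hflag : IsFlag Pol.lines (insert U Tw) := by
        refine ⟨?_, ?_⟩
        · rintro T1 (rfl | hT1) T2 (rfl | hT2) hne2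
          · exact absurd rfl hne2
          · obtain ⟨l, hl, rfl⟩ := hT2
            simp only [Set.mem_Icc] at hl
            rcases le_or_gt l J₀.card with hll | hll
            · refine Or.inr (Set.Subset.trans ?_ hJsub)
              refine spanJ_mono ?_
              have := hfM l J₀.card hll (by omega)
              rwa [hfJ0] at this
            · refine Or.inl (hUsub.trans (spanJ_mono ?_))
              have := hfM (insert m' J₀).card l (by omega) hl.2
              rwa [hfJ1] at this
          · obtain ⟨l, hl, rfl⟩ := hT1
            simp only [Set.mem_Icc] at hl
            rcases le_or_gt l J₀.card with hll | hll
            · refine Or.inl (Set.Subset.trans ?_ hJsub)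
              refine spanJ_mono ?_
              have := hfM l J₀.card hll (by omega)
              rwa [hfJ0] at this
            · refine Or.inr (hUsub.trans (spanJ_mono ?_))
              have := hfM (insert m' J₀).card l (by omega) hl.2
              rwa [hfJ1] at this
          · exact hTflag.1 hT1 hT2 hne2
        · rintro T1 (rfl | hT1)
          · exact ⟨hUsing, ⟨x, hxU⟩⟩
          · exact hTflag.2 T1 hT1
      have hb := (flag_bound Pol hn0 hflag).2
      rw [Set.ncard_insert_of_notMem hUt hTfin, hTcard] at hb
      omega
  have e1 := key m hm hg1 h1
  have e2 := key (σ m) hσm hg2 h2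
  have hpm : p m ∈ spanJ Pol.lines p (insert (σ m) J₀) := by
    have h3 := mem_spanJ (lines := Pol.lines) (p := p) (Finset.mem_insert_self m J₀)
    rw [← e1, e2] at h3
    exact h3
  refine not_mem_spanJ Pol hσ ?_ hpm
  intro hmem
  rcases Finset.mem_insert.1 hmem with h | h
  · exact hnee m h.symm
  · exact hm h

theorem mem_spanJ_of_col (hn0 : n ≠ 0) {J : Finset (Fin (2 * n))} (hJ : Good σ J)
    {y : P} (hy : ∀ t, σ t ∉ J → Col Pol.lines (p t) y) :
    y ∈ spanJ Pol.lines p J := by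
  have hinv := sig_invol Pol hσ
  have hnee := sig_ne Pol hσ
  have claim : ∀ (d : ℕ) (E : Finset (Fin (2 * n))), Good σ E → J ⊆ E →
      E.card + d = n → y ∈ spanJ Pol.lines p E := by
    intro d
    induction d with
    | zero =>
      intro E hE hJE hcard
      refine mem_frame_span Pol hσ hn0 hE (by omega) ?_
      intro a ha
      exact hy a (fun hcon => hE a ha (hJE hcon))
    | succ d ih =>
      intro E hE hJE hcard
      have hex : ∃ m, m ∉ E ∪ E.image σ := by
        by_contra hcon
        push_neg at hcon
        have huniv : E ∪ E.image σ = Finset.univ := Finset.eq_univ_iff_forall.2 hcon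
        have hcc : (E ∪ E.image σ).card ≤ E.card + E.card := by
          have := Finset.card_union_le E (E.image σ)
          have himg : (E.image σ).card ≤ E.card := Finset.card_image_le
          omega
        rw [huniv] at hcc
        simp at hcc
        omega
      obtain ⟨m, hm⟩ := hex
      have hmE : m ∉ E := fun h => hm (Finset.mem_union_left _ h)
      have hσmE : σ m ∉ E := by
        intro h
        exact hm (Finset.mem_union_right _ (Finset.mem_image.2 ⟨σ m, h, hinv m⟩))
      have hh1 := ih (insert m E) (good_insert hinv hnee hE hσmE hmE)
        (hJE.trans (Finset.subset_insert _ _))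
        (by rw [Finset.card_insert_of_notMem hmE]; omega)
      have hh2 := ih (insert (σ m) E)
        (good_insert hinv hnee hE (by rw [hinv]; exact hmE) hσmE)
        (hJE.trans (Finset.subset_insert _ _))
        (by rw [Finset.card_insert_of_notMem hσmE]; omega)
      exact swap_lemma Pol hσ hn0 hE hmE hσmE hh1 hh2
  exact claim (n - J.card) J hJ subset_rfl (by have := good_card hinv hJ; omega)

theorem spanJ_inter (hn0 : n ≠ 0) {J J' : Finset (Fin (2 * n))}
    (hJ : Good σ J) (hJ' : Good σ J') :
    spanJ Pol.lines p J ∩ spanJ Pol.lines p J' = spanJ Pol.lines p (J ∩ J') := by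
  apply subset_antisymm
  · rintro x ⟨hx1, hx2⟩
    refine mem_spanJ_of_col Pol hσ hn0 (Good.subset Finset.inter_subset_left hJ) ?_
    intro t ht
    by_cases hσt : σ t ∈ J
    · have : σ t ∉ J' := fun h => ht (Finset.mem_inter.2 ⟨hσt, h⟩)
      exact col_pt_spanJ Pol hσ this hx2
    · exact col_pt_spanJ Pol hσ hσt hx1
  · exact Set.subset_inter (spanJ_mono Finset.inter_subset_left)
      (spanJ_mono Finset.inter_subset_right)

end Swap

section MaxSing

variable (Pol : PolarSpace P n)

theorem maxSingular_hasDim (hn0 : n ≠ 0) {M : Set P} (hM : IsSingular Pol.lines M)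
    (hMne : M.Nonempty) (hmax : ∀ T, IsSingular Pol.lines T → M ⊆ T → T = M) :
    HasDim Pol.lines M ((n : ℤ) - 1) := by
  have h0 : IsFlagIn Pol.lines M {M} := by
    refine ⟨⟨?_, ?_⟩, ?_⟩
    · intro a ha b hb hne2
      rcases ha; rcases hb; exact absurd rfl hne2
    · intro T hT; rcases hT; exact ⟨hM, hMne⟩
    · intro T hT; rcases hT; exact subset_rfl
  obtain ⟨C, hsub, hC, hCmax⟩ := exists_maximal_flagIn h0
  obtain ⟨F, hCF, hF, hFmax⟩ := exists_maximal_flag hC.1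
  have hFcard := Pol.flag_card F hF hFmax
  have hFfin : F.Finite := Set.finite_of_ncard_ne_zero (by rw [hFcard]; exact hn0)
  have hMC : M ∈ C := hsub rfl
  have hFC : F = C := by
    refine subset_antisymm ?_ hCF
    intro T hTF
    by_cases hTM : T ⊆ M
    · have h1 : IsFlagIn Pol.lines M (C ∪ {T}) := by
        refine ⟨⟨?_, ?_⟩, ?_⟩
        · rintro T1 (hT1 | hT1) T2 (hT2 | hT2) hne2
          · exact hC.1.1 hT1 hT2 hne2
          · rcases hT2; exact hF.1 (hCF hT1) hTF hne2
          · rcases hT1; exact hF.1 hTF (hCF hT2) hne2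
          · rcases hT1; rcases hT2; exact absurd rfl hne2
        · rintro T1 (hT1 | hT1)
          · exact hC.1.2 T1 hT1
          · rcases hT1; exact hF.2 T hTF
        · rintro T1 (hT1 | hT1)
          · exact hC.2 T1 hT1
          · rcases hT1; exact hTM
      have h2 := hCmax _ h1 Set.subset_union_left
      rw [h2]; exact Set.mem_union_right _ rfl
    · exfalso
      have hTne : T ≠ M := fun h => hTM (h ▸ subset_rfl)
      rcases hF.1 hTF (hCF hMC) hTne with h | h
      · exact hTM h
      · exact hTne (hmax T (hF.2 T hTF).1 h)
  refine ⟨hM, C, hC, hCmax, hFC ▸ hFfin, ?_⟩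
  rw [← hFC, hFcard]; ring

end MaxSing

end PolarGeo

namespace PolarGeo

variable {P : Type*} {n : ℕ}

section Membership

variable (Pol : PolarSpace P n) {p : Fin (2 * n) → P} {σ : Fin (2 * n) → Fin (2 * n)}
  (hσ : ∀ a b, ¬ Col Pol.lines (p a) (p b) ↔ b = σ a)

include hσ

theorem mem_baseSubset_of (hn0 : n ≠ 0) {k : ℕ} {J : Finset (Fin (2 * n))}
    (hJ : Good σ J) (hcard : J.card = k + 1) :
    spanJ Pol.lines p J ∈ baseSubset Pol.lines p (k : ℤ) := by
  refine ⟨?_, ⟨(↑J : Set (Fin (2 * n))), rfl⟩⟩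
  have h1 := hasDim_spanJ Pol hσ hn0 hJ (Finset.card_pos.1 (by omega))
  rw [hcard] at h1
  have h2 : ((k + 1 : ℕ) : ℤ) - 1 = (k : ℤ) := by push_cast; ring
  rwa [h2] at h1

theorem rep_of_mem_baseSubset {k' : ℤ} {S : Set P} (hS : S ∈ baseSubset Pol.lines p k') :
    ∃ A : Finset (Fin (2 * n)), Good σ A ∧ S = spanJ Pol.lines p A := by
  obtain ⟨⟨hsing, -⟩, I, hI⟩ := hS
  refine ⟨(Set.toFinite I).toFinset, ?_, ?_⟩
  · intro a ha hsa
    rw [Set.Finite.mem_toFinset] at ha hsa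
    have h1 : p a ∈ S := hI ▸ subset_span ⟨a, ha, rfl⟩
    have h2 : p (σ a) ∈ S := hI ▸ subset_span ⟨σ a, hsa, rfl⟩
    exact (hσ a (σ a)).2 rfl (hsing.2 _ h1 _ h2)
  · rw [hI]
    unfold spanJ
    rw [Set.Finite.coe_toFinset]

end Membership

end PolarGeo

open PolarGeo
/-- Proposition 3 (type D, `k ≤ n-2`): `𝓑(-i)` is exact. -/
theorem minus_exact_typeD
    {P : Type*} {n : ℕ} (Pol : PolarSpace P n) (hn : 3 ≤ n)
    (hD : TypeD Pol.lines n) (k : ℕ) (hk : k ≤ n - 2)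
    (p : Fin (2 * n) → P) (hp : IsBase Pol.lines p) (i : Fin (2 * n)) :
    IsExact Pol.lines n (k : ℤ) (baseSubset Pol.lines p (k : ℤ))
      (minus (baseSubset Pol.lines p (k : ℤ)) (p i)) := by
  classical
  have hn0 : n ≠ 0 := by omega
  obtain ⟨σ, hσ⟩ := exists_sigma Pol hp
  have hinv := sig_invol Pol hσ
  have hnee := sig_ne Pol hσ
  constructor
  · exact fun S hS => hS.1
  · intro q hq hsub
    obtain ⟨τ, hτ⟩ := exists_sigma Pol hq
    -- Step 1: every p j with j ≠ i is a point of the base q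
    have step1 : ∀ j, j ≠ i → ∃ a, q a = p j := by
      intro j hj
      have hgoodj : Good σ {j} := by
        intro a ha hmem
        rw [Finset.mem_singleton] at ha hmem
        exact hnee a (by rw [ha] at hmem; rw [ha, hmem])
      set B : Finset (Fin (2 * n)) := {i, σ i} \ {j} with hB
      have hdisjB : Disjoint ({j} : Finset (Fin (2 * n))) B := by
        rw [Finset.disjoint_left]
        intro t ht ht2
        rw [Finset.mem_singleton] at ht
        subst ht
        exact (Finset.mem_sdiff.1 ht2).2 (Finset.mem_singleton_self t)
      have hBsub : B ∪ B.image σ ⊆ {i, σ i} := by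
        intro t ht
        rcases Finset.mem_union.1 ht with ht | ht
        · exact (Finset.mem_sdiff.1 ht).1
        · obtain ⟨a, ha, rfl⟩ := Finset.mem_image.1 ht
          have := (Finset.mem_sdiff.1 ha).1
          rcases Finset.mem_insert.1 this with rfl | h
          · exact Finset.mem_insert_of_mem (Finset.mem_singleton_self _)
          · rw [Finset.mem_singleton] at h
            rw [h, hinv]
            exact Finset.mem_insert_self _ _
      have hBcard : (B ∪ B.image σ).card ≤ 2 := by
        refine le_trans (Finset.card_le_card hBsub) ?_
        refine le_trans (Finset.card_insert_le _ _) ?_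
        simp
      obtain ⟨J₁, hjJ₁, hJ₁card, hJ₁good, hJ₁disj⟩ :=
        good_extend hinv hnee (B := B) (s := k + 1) (by omega) k {j} hgoodj hdisjB
          (by rw [Finset.card_singleton]; omega)
      have hjJ₁' : j ∈ J₁ := hjJ₁ (Finset.mem_singleton_self j)
      have hiJ₁ : i ∉ J₁ := by
        intro h
        refine (Finset.disjoint_left.1 hJ₁disj) h ?_
        rw [hB, Finset.mem_sdiff]
        exact ⟨Finset.mem_insert_self _ _, by rw [Finset.mem_singleton]; exact fun h2 => hj h2.symm⟩
      have hσiJ₁ : σ i ∈ J₁ → σ i = j := by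
        intro h
        by_contra hcon
        refine (Finset.disjoint_left.1 hJ₁disj) h ?_
        rw [hB, Finset.mem_sdiff]
        exact ⟨Finset.mem_insert_of_mem (Finset.mem_singleton_self _),
          by rw [Finset.mem_singleton]; exact hcon⟩
      set J₂ : Finset (Fin (2 * n)) := insert j ((J₁.erase j).image σ) with hJ₂def
      have hjimg : j ∉ (J₁.erase j).image σ := by
        intro hmem
        obtain ⟨a, ha, hae⟩ := Finset.mem_image.1 hmem
        have haj : a = σ j := by rw [← hinv a, hae]
        have h2 : σ j ∈ J₁ := by rw [← haj]; exact (Finset.mem_erase.1 ha).2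
        exact hJ₁good j hjJ₁' h2
      have hJ₂good : Good σ J₂ := by
        intro t ht
        rcases Finset.mem_insert.1 ht with rfl | ht
        · intro hmem
          rcases Finset.mem_insert.1 hmem with h | h
          · exact hnee t h
          · obtain ⟨a, ha, hae⟩ := Finset.mem_image.1 h
            have : a = t := sigma_inj hinv hae
            exact (Finset.mem_erase.1 ha).1 this
        · obtain ⟨a, ha, rfl⟩ := Finset.mem_image.1 ht
          intro hmem
          rw [hinv] at hmem
          rcases Finset.mem_insert.1 hmem with h | h
          · exact (Finset.mem_erase.1 ha).1 h
          · obtain ⟨b, hb, hbe⟩ := Finset.mem_image.1 h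
            exact hJ₁good b (Finset.mem_erase.1 hb).2 (hbe ▸ (Finset.mem_erase.1 ha).2)
      have hJ₂card : J₂.card = k + 1 := by
        rw [hJ₂def, Finset.card_insert_of_notMem hjimg,
          Finset.card_image_of_injective _ (sigma_inj hinv),
          Finset.card_erase_of_mem hjJ₁', hJ₁card]
        omega
      have hiJ₂ : i ∉ J₂ := by
        intro hmem
        rcases Finset.mem_insert.1 hmem with h | h
        · exact hj h.symm
        · obtain ⟨a, ha, hae⟩ := Finset.mem_image.1 h
          have haσi : a = σ i := by rw [← hinv a, hae]
          have h2 : σ i ∈ J₁ := haσi ▸ (Finset.mem_erase.1 ha).2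
          have h3 : σ i ≠ j := haσi ▸ (Finset.mem_erase.1 ha).1
          exact h3 (hσiJ₁ h2)
      have hJ₁J₂ : J₁ ∩ J₂ = {j} := by
        ext t
        rw [Finset.mem_inter, Finset.mem_singleton]
        constructor
        · rintro ⟨ht1, ht2⟩
          rcases Finset.mem_insert.1 ht2 with rfl | ht2
          · rfl
          · obtain ⟨a, ha, rfl⟩ := Finset.mem_image.1 ht2
            exact absurd ht1 (hJ₁good a (Finset.mem_erase.1 ha).2)
        · rintro rfl
          exact ⟨hjJ₁', Finset.mem_insert_self _ _⟩
      have hm1 : spanJ Pol.lines p J₁ ∈ minus (baseSubset Pol.lines p (k : ℤ)) (p i) :=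
        ⟨mem_baseSubset_of Pol hσ hn0 hJ₁good hJ₁card, not_mem_spanJ Pol hσ hiJ₁⟩
      have hm2 : spanJ Pol.lines p J₂ ∈ minus (baseSubset Pol.lines p (k : ℤ)) (p i) :=
        ⟨mem_baseSubset_of Pol hσ hn0 hJ₂good hJ₂card, not_mem_spanJ Pol hσ hiJ₂⟩
      obtain ⟨A₁, hA₁good, hA₁⟩ := rep_of_mem_baseSubset Pol hτ (hsub hm1)
      obtain ⟨A₂, hA₂good, hA₂⟩ := rep_of_mem_baseSubset Pol hτ (hsub hm2)
      have hint : spanJ Pol.lines p J₁ ∩ spanJ Pol.lines p J₂ = {p j} := by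
        rw [spanJ_inter Pol hσ hn0 hJ₁good hJ₂good, hJ₁J₂, spanJ_singleton]
      have hint2 : spanJ Pol.lines q (A₁ ∩ A₂) = {p j} := by
        rw [← spanJ_inter Pol hτ hn0 hA₁good hA₂good, ← hA₁, ← hA₂]
        exact hint
      have hne4 : (A₁ ∩ A₂).Nonempty := by
        rcases Finset.eq_empty_or_nonempty (A₁ ∩ A₂) with h | h
        · rw [h, spanJ_empty] at hint2
          exact absurd hint2.symm (Set.singleton_ne_empty _)
        · exact h
      obtain ⟨a, ha⟩ := hne4
      have h6 : q a ∈ ({p j} : Set P) := by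
        rw [← hint2]; exact mem_spanJ ha
      exact ⟨a, h6⟩
    -- the point of q which is not one of the p j, j ≠ i
    obtain ⟨ψ, hψ⟩ : ∃ ψ : Fin (2 * n) → Fin (2 * n), ∀ j, j ≠ i → q (ψ j) = p j := by
      choose g hg using step1
      refine ⟨fun j => if h : j ≠ i then g j h else i, fun j hj => ?_⟩
      show q (if h : j ≠ i then g j h else i) = p j
      rw [dif_pos hj]
      exact hg j hj
    set Φ : Finset (Fin (2 * n)) := (Finset.univ.erase i).image ψ with hΦ
    have hψinj : ∀ j ∈ Finset.univ.erase i, ∀ j' ∈ Finset.univ.erase i,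
        ψ j = ψ j' → j = j' := by
      intro j hj j' hj' h
      have hj2 : j ≠ i := (Finset.mem_erase.1 hj).1
      have hj'2 : j' ≠ i := (Finset.mem_erase.1 hj').1
      refine hp.1 ?_
      rw [← hψ j hj2, ← hψ j' hj'2, h]
    have hΦcard : Φ.card = 2 * n - 1 := by
      rw [hΦ, Finset.card_image_of_injOn hψinj,
        Finset.card_erase_of_mem (Finset.mem_univ i), Finset.card_univ, Fintype.card_fin]
    have hΦcompl : Φᶜ.card = 1 := by
      rw [Finset.card_compl, hΦcard]
      simp only [Fintype.card_fin]
      omega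
    obtain ⟨a₀, ha₀⟩ := Finset.card_eq_one.1 hΦcompl
    have ha₀Φ : a₀ ∉ Φ := by
      have h1 : a₀ ∈ Φᶜ := ha₀ ▸ Finset.mem_singleton_self a₀
      exact Finset.mem_compl.1 h1
    have hψΦ : ∀ j, j ≠ i → ψ j ∈ Φ := by
      intro j hj
      exact Finset.mem_image.2 ⟨j, Finset.mem_erase.2 ⟨hj, Finset.mem_univ j⟩, rfl⟩
    set x := q a₀ with hxdef
    have hx1 : ∀ j, j ≠ i → j ≠ σ i → Col Pol.lines (p j) x := by
      intro j hj hj2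
      have hσj : σ j ≠ i := fun h => hj2 (by rw [← hinv j, h])
      rw [← hψ j hj]
      refine (col_base_iff Pol hτ).2 ?_
      intro h
      have hnc : ¬ Col Pol.lines (q (ψ j)) (q (ψ (σ j))) := by
        rw [hψ j hj, hψ (σ j) hσj]
        exact (hσ j (σ j)).2 rfl
      have h2 : ψ (σ j) = τ (ψ j) := (hτ (ψ j) (ψ (σ j))).1 hnc
      rw [← h2] at h
      exact ha₀Φ (h ▸ hψΦ (σ j) hσj)
    have hx2 : ¬ Col Pol.lines (p (σ i)) x := by
      have hσii : σ i ≠ i := hnee i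
      have hnc : ¬ Col Pol.lines (q (ψ (σ i))) (q (τ (ψ (σ i)))) := (hτ _ _).2 rfl
      have hbΦ : τ (ψ (σ i)) ∉ Φ := by
        intro hmem
        obtain ⟨j', hj', hj'e⟩ := Finset.mem_image.1 hmem
        have hj'i : j' ≠ i := (Finset.mem_erase.1 hj').1
        rw [← hj'e, hψ (σ i) hσii, hψ j' hj'i] at hnc
        have h3 := (hσ (σ i) j').1 hnc
        rw [hinv] at h3
        exact hj'i h3
      have hba : τ (ψ (σ i)) = a₀ := by
        have h4 : τ (ψ (σ i)) ∈ Φᶜ := Finset.mem_compl.2 hbΦ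
        rw [ha₀] at h4
        exact Finset.mem_singleton.1 h4
      rw [← hψ (σ i) hσii, hxdef, ← hba]
      exact hnc
    -- x lies in span (p '' (insert i E)) for suitable frames minus one point
    have claimM : ∀ E : Finset (Fin (2 * n)), Good σ E → E.card = n - 1 →
        i ∉ E → σ i ∉ E → x ∈ spanJ Pol.lines p (insert i E) := by
      intro E hEgood hEcard hiE hσiE
      have hxE : ∀ e ∈ E, Col Pol.lines (p e) x :=
        fun e he => hx1 e (fun h => hiE (h ▸ he)) (fun h => hσiE (h ▸ he))
      have hEne : E.Nonempty := Finset.card_pos.1 (by omega)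
      have hWdim : HasDim Pol.lines (spanJ Pol.lines p E) ((n : ℤ) - 2) := by
        have h1 := hasDim_spanJ Pol hσ hn0 hEgood hEne
        rw [hEcard] at h1
        have hcast : ((n - 1 : ℕ) : ℤ) - 1 = (n : ℤ) - 2 := by
          have h2 : (1 : ℕ) ≤ n := by omega
          push_cast [h2]
          ring
        rwa [hcast] at h1
      have hgi : Good σ (insert i E) := good_insert hinv hnee hEgood hσiE hiE
      have hgσi : Good σ (insert (σ i) E) :=
        good_insert hinv hnee hEgood (by rw [hinv]; exact hiE) hσiE
      have hci : (insert i E).card = n := by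
        rw [Finset.card_insert_of_notMem hiE]; omega
      have hcσi : (insert (σ i) E).card = n := by
        rw [Finset.card_insert_of_notMem hσiE]; omega
      have hMi : HasDim Pol.lines (spanJ Pol.lines p (insert i E)) ((n : ℤ) - 1) := by
        have h1 := hasDim_spanJ Pol hσ hn0 hgi ⟨i, Finset.mem_insert_self _ _⟩
        rwa [hci] at h1
      have hMσi : HasDim Pol.lines (spanJ Pol.lines p (insert (σ i) E)) ((n : ℤ) - 1) := by
        have h1 := hasDim_spanJ Pol hσ hn0 hgσi ⟨σ i, Finset.mem_insert_self _ _⟩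
        rwa [hcσi] at h1
      set Mx := span Pol.lines (insert x (p '' ↑E)) with hMxdef
      have hMxsing : IsSingular Pol.lines Mx := by
        refine isSingular_span Pol ?_
        rintro u (rfl | ⟨a, ha, rfl⟩) v (rfl | ⟨b, hb, rfl⟩)
        · exact col_refl _ _
        · exact col_symm (hxE b (by exact_mod_cast hb))
        · exact hxE a (by exact_mod_cast ha)
        · refine (col_base_iff Pol hσ).2 (fun h => ?_)
          exact hEgood a (by exact_mod_cast ha) (by rw [← h]; exact_mod_cast hb)
      have hxMx : x ∈ Mx := subset_span (Set.mem_insert _ _)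
      have hWMx : spanJ Pol.lines p E ⊆ Mx := span_mono (Set.subset_insert _ _)
      have hxW : x ∉ spanJ Pol.lines p E := by
        intro h
        exact hx2 (col_pt_spanJ Pol hσ (t := σ i) (by rw [hinv]; exact hiE) h)
      have hMxmax : ∀ T, IsSingular Pol.lines T → Mx ⊆ T → T = Mx := by
        intro T hT hsub2
        by_contra hne3
        obtain ⟨f, hf0, hfE1, hfE2, hfE, hfP, hfM⟩ :=
          exists_fullchain3 (subset_refl E) (subset_refl E)
        rw [hEcard] at hfE hfP hfM
        obtain ⟨hTflag, hTfin, hTcard, hTsub⟩ :=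
          tower_lemma Pol hσ (f := f) (a := 1) (b := n - 1) le_rfl (by omega)
            (fun l _ h2' => (hfP l h2').1)
            (fun l l' _ h2' h3 => hfM l l' h2' h3)
            (by rw [hfE]; exact hEgood)
        set Tw := towerSet Pol.lines p f 1 (n - 1) with hTwdef
        have hTwW : ∀ T' ∈ Tw, T' ⊆ spanJ Pol.lines p E := by
          intro T' h
          have h2 := hTsub T' h
          rwa [hfE] at h2
        have hMxTw : Mx ∉ Tw := fun h => hxW (hTwW Mx h hxMx)
        have hTTw : T ∉ Tw := fun h => hxW (hTwW T h (hsub2 hxMx))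
        have hflag : IsFlag Pol.lines (insert T (insert Mx Tw)) := by
          refine ⟨?_, ?_⟩
          · intro T1 hT1 T2 hT2 hne2
            simp only [Set.mem_insert_iff] at hT1 hT2
            rcases hT1 with rfl | rfl | hT1 <;> rcases hT2 with rfl | rfl | hT2
            · exact absurd rfl hne2
            · exact Or.inr hsub2
            · exact Or.inr ((hTwW _ hT2).trans (hWMx.trans hsub2))
            · exact Or.inl hsub2
            · exact absurd rfl hne2
            · exact Or.inr ((hTwW _ hT2).trans hWMx)
            · exact Or.inl ((hTwW _ hT1).trans (hWMx.trans hsub2))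
            · exact Or.inl ((hTwW _ hT1).trans hWMx)
            · exact hTflag.1 hT1 hT2 hne2
          · intro T1 hT1
            simp only [Set.mem_insert_iff] at hT1
            rcases hT1 with rfl | rfl | hT1
            · exact ⟨hT, ⟨x, hsub2 hxMx⟩⟩
            · exact ⟨hMxsing, ⟨x, hxMx⟩⟩
            · exact hTflag.2 T1 hT1
        have hb := (flag_bound Pol hn0 hflag).2
        have hTni : T ∉ insert Mx Tw := by
          intro h
          rcases Set.mem_insert_iff.1 h with h | h
          · exact hne3 h
          · exact hTTw h
        rw [Set.ncard_insert_of_notMem hTni (hTfin.insert Mx),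
          Set.ncard_insert_of_notMem hMxTw hTfin, hTcard] at hb
        omega
      have hMxdim : HasDim Pol.lines Mx ((n : ℤ) - 1) :=
        maxSingular_hasDim Pol hn0 hMxsing ⟨x, hxMx⟩ hMxmax
      have hWset := hD (spanJ Pol.lines p E) hWdim
      have hMine : spanJ Pol.lines p (insert i E) ≠ spanJ Pol.lines p (insert (σ i) E) := by
        refine Ne.symm (spanJ_ne Pol hσ (Finset.mem_insert_self i E) ?_)
        intro hmem
        rcases Finset.mem_insert.1 hmem with h | h
        · exact hnee i h.symm
        · exact hiE h
      have hpairsub : ({spanJ Pol.lines p (insert i E), spanJ Pol.lines p (insert (σ i) E)} :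
          Set (Set P)) ⊆ {M | M ∈ Gdim Pol.lines ((n : ℤ) - 1) ∧ spanJ Pol.lines p E ⊆ M} := by
        rintro M (rfl | rfl)
        · exact ⟨hMi, spanJ_mono (Finset.subset_insert _ _)⟩
        · exact ⟨hMσi, spanJ_mono (Finset.subset_insert _ _)⟩
      have hGSfin : ({M | M ∈ Gdim Pol.lines ((n : ℤ) - 1) ∧
          spanJ Pol.lines p E ⊆ M} : Set (Set P)).Finite :=
        Set.finite_of_ncard_ne_zero (by rw [hWset]; omega)
      have hGSeq : ({spanJ Pol.lines p (insert i E), spanJ Pol.lines p (insert (σ i) E)} :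
          Set (Set P)) = {M | M ∈ Gdim Pol.lines ((n : ℤ) - 1) ∧ spanJ Pol.lines p E ⊆ M} := by
        refine Set.eq_of_subset_of_ncard_le hpairsub ?_ hGSfin
        rw [hWset, Set.ncard_pair hMine]
      have hMxmem : Mx ∈ ({spanJ Pol.lines p (insert i E),
          spanJ Pol.lines p (insert (σ i) E)} : Set (Set P)) :=
        hGSeq ▸ (⟨hMxdim, hWMx⟩ :
          Mx ∈ {M | M ∈ Gdim Pol.lines ((n : ℤ) - 1) ∧ spanJ Pol.lines p E ⊆ M})
      rcases hMxmem with h | h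
      · exact h ▸ hxMx
      · exfalso
        have hxm : x ∈ spanJ Pol.lines p (insert (σ i) E) := h ▸ hxMx
        refine hx2 (col_pt_spanJ Pol hσ (t := σ i) ?_ hxm)
        rw [hinv]
        intro hmem
        rcases Finset.mem_insert.1 hmem with h2 | h2
        · exact hnee i h2.symm
        · exact hiE h2
    -- apply claimM to two disjoint frames-minus-one
    have hBicard : (({i, σ i} : Finset (Fin (2 * n))) ∪
        ({i, σ i} : Finset (Fin (2 * n))).image σ).card ≤ 2 := by
      have hsub2 : (({i, σ i} : Finset (Fin (2 * n))) ∪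
          ({i, σ i} : Finset (Fin (2 * n))).image σ) ⊆ {i, σ i} := by
        intro t ht
        rcases Finset.mem_union.1 ht with ht | ht
        · exact ht
        · obtain ⟨a, ha, rfl⟩ := Finset.mem_image.1 ht
          rcases Finset.mem_insert.1 ha with rfl | h
          · exact Finset.mem_insert_of_mem (Finset.mem_singleton_self _)
          · rw [Finset.mem_singleton] at h
            rw [h, hinv]
            exact Finset.mem_insert_self _ _
      refine le_trans (Finset.card_le_card hsub2) ?_
      refine le_trans (Finset.card_insert_le _ _) ?_
      simp
    obtain ⟨D, -, hDcard, hDgood, hDdisj⟩ :=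
      good_extend hinv hnee (B := ({i, σ i} : Finset (Fin (2 * n)))) (s := n - 1)
        (by omega) (n - 1) ∅ (fun a ha => absurd ha (Finset.notMem_empty a))
        (Finset.disjoint_left.2 (fun a ha => absurd ha (Finset.notMem_empty a)))
        (by rw [Finset.card_empty]; omega)
    have hiD : i ∉ D := fun h =>
      (Finset.disjoint_left.1 hDdisj) h (Finset.mem_insert_self _ _)
    have hσiD : σ i ∉ D := fun h =>
      (Finset.disjoint_left.1 hDdisj) h (Finset.mem_insert_of_mem (Finset.mem_singleton_self _))
    set D' := D.image σ with hD'def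
    have hD'good : Good σ D' := good_image hinv hDgood
    have hD'card : D'.card = n - 1 := by
      rw [hD'def, Finset.card_image_of_injective _ (sigma_inj hinv), hDcard]
    have hiD' : i ∉ D' := by
      intro h
      obtain ⟨d, hd, hde⟩ := Finset.mem_image.1 h
      have : d = σ i := by rw [← hinv d, hde]
      exact hσiD (this ▸ hd)
    have hσiD' : σ i ∉ D' := by
      intro h
      obtain ⟨d, hd, hde⟩ := Finset.mem_image.1 h
      have : d = i := sigma_inj hinv hde
      exact hiD (this ▸ hd)
    have hxinD := claimM D hDgood hDcard hiD hσiD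
    have hxinD' := claimM D' hD'good hD'card hiD' hσiD'
    have hDD' : insert i D ∩ insert i D' = {i} := by
      ext t
      rw [Finset.mem_inter, Finset.mem_singleton]
      constructor
      · rintro ⟨ht1, ht2⟩
        rcases Finset.mem_insert.1 ht1 with rfl | ht1
        · rfl
        · rcases Finset.mem_insert.1 ht2 with rfl | ht2
          · rfl
          · obtain ⟨e, he, rfl⟩ := Finset.mem_image.1 ht2
            exact absurd ht1 (hDgood e he)
      · rintro rfl
        exact ⟨Finset.mem_insert_self _ _, Finset.mem_insert_self _ _⟩
    have hgiD : Good σ (insert i D) := good_insert hinv hnee hDgood hσiD hiD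
    have hgiD' : Good σ (insert i D') := good_insert hinv hnee hD'good hσiD' hiD'
    have hxi : x = p i := by
      have h5 : x ∈ spanJ Pol.lines p (insert i D) ∩ spanJ Pol.lines p (insert i D') :=
        ⟨hxinD, hxinD'⟩
      rw [spanJ_inter Pol hσ hn0 hgiD hgiD', hDD', spanJ_singleton] at h5
      exact h5
    -- range q = range p
    have hrange : Set.range p ⊆ Set.range q := by
      rintro y ⟨j, rfl⟩
      rcases eq_or_ne j i with rfl | hj
      · exact ⟨a₀, hxi⟩
      · obtain ⟨a, ha⟩ := step1 j hj
        exact ⟨a, ha⟩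
    have hrq : Set.range q = Set.range p := by
      have h1 : (Set.range p).ncard = 2 * n := by
        rw [← Set.image_univ, Set.ncard_image_of_injective _ hp.1, Set.ncard_univ]
        simp
      have h2 : (Set.range q).ncard = 2 * n := by
        rw [← Set.image_univ, Set.ncard_image_of_injective _ hq.1, Set.ncard_univ]
        simp
      exact (Set.eq_of_subset_of_ncard_le hrange (by rw [h1, h2]) (Set.finite_range q)).symm
    -- conclude
    ext S
    constructor
    · rintro ⟨hdim, I, hI⟩
      refine ⟨hdim, p ⁻¹' (q '' I), ?_⟩
      have hsub3 : q '' I ⊆ Set.range p := by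
        rw [← hrq]
        exact Set.image_subset_range q I
      rw [Set.image_preimage_eq_of_subset hsub3]
      exact hI
    · rintro ⟨hdim, I, hI⟩
      refine ⟨hdim, q ⁻¹' (p '' I), ?_⟩
      have hsub3 : p '' I ⊆ Set.range q := by
        rw [hrq]
        exact Set.image_subset_range p I
      rw [Set.image_preimage_eq_of_subset hsub3]
      exact hI
end
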